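/- arXiv:2008.12581 — 4 statements merged into one kernel-verified Lean document; each statement's English description precedes it below -/
import Mathlib

section
/- Let f ∈ C⁰(B⁺, ℂ) be a continuous function on the open upper half-disc such that its square f² extends to a continuous function on B⁺ ∪ I. Then f itself extends to a continuous function on B⁺ ∪ I. -/
open Complex MeasureTheory Set Metric Filter Topology

noncomputable section

/-- Points of `ℝ³`, written as iterated pairs. -/
abbrev P3 : Type := ℝ × ℝ × ℝ

/-- The open upper unit half-disc `B⁺`. -/
def Bplus : Set ℂ := {w : ℂ | ‖w‖ < 1 ∧ 0 < w.im}

/-- The straight part `I = (-1,1)` of the boundary of `B⁺`. -/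
def Iseg : Set ℂ := {w : ℂ | w.im = 0 ∧ |w.re| < 1}

/-- The open unit disc `B`. -/
def Bdisc : Set ℂ := {w : ℂ | ‖w‖ < 1}

/-- The open upper half-disc of radius `ρ` centred at `0`. -/
def Bplusr (ρ : ℝ) : Set ℂ := {w : ℂ | ‖w‖ < ρ ∧ 0 < w.im}

/-- The parameters `u` of the horizontal segment `I_ρ` at height `ρ`. -/
def Irho (ρ : ℝ) : Set ℝ := {u : ℝ | (⟨u, ρ⟩ : ℂ) ∈ Bplus}

/-- Partial derivative in direction `u` of a real-valued function on `ℂ`. -/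
def du (f : ℂ → ℝ) (w : ℂ) : ℝ := fderiv ℝ f w 1

/-- Partial derivative in direction `v` of a real-valued function on `ℂ`. -/
def dv (f : ℂ → ℝ) (w : ℂ) : ℝ := fderiv ℝ f w Complex.I

/-- Laplacian of a real-valued function on `ℂ`. -/
def lapl (f : ℂ → ℝ) (w : ℂ) : ℝ := du (fun z => du f z) w + dv (fun z => dv f z) w

/-- Wirtinger derivative `f_w = (f_u - i f_v)/2` of a real-valued function. -/
def wder (f : ℂ → ℝ) (w : ℂ) : ℂ := ((du f w : ℂ) - Complex.I * (dv f w : ℂ)) / 2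

/-- Wirtinger derivative `f_{w̄} = (f_u + i f_v)/2` of a complex-valued function. -/
def wbar (f : ℂ → ℂ) (w : ℂ) : ℂ := (fderiv ℝ f w 1 + Complex.I * fderiv ℝ f w Complex.I) / 2

/-- Componentwise Wirtinger derivative `f_{w̄}` of a `ℂ²`-valued function. -/
def wbar2 (f : ℂ → ℂ × ℂ) (w : ℂ) : ℂ × ℂ :=
  (wbar (fun z => (f z).1) w, wbar (fun z => (f z).2) w)

/-- First component of a `ℝ³`-valued map. -/
def c1 (x : ℂ → P3) : ℂ → ℝ := fun w => (x w).1
/-- Second component of a `ℝ³`-valued map. -/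
def c2 (x : ℂ → P3) : ℂ → ℝ := fun w => (x w).2.1
/-- Third component of a `ℝ³`-valued map. -/
def c3 (x : ℂ → P3) : ℂ → ℝ := fun w => (x w).2.2

/-- The partial derivative `x_u` of `x : ℂ → ℝ³`. -/
def gradU (x : ℂ → P3) (w : ℂ) : P3 := (du (c1 x) w, du (c2 x) w, du (c3 x) w)
/-- The partial derivative `x_v` of `x : ℂ → ℝ³`. -/
def gradV (x : ℂ → P3) (w : ℂ) : P3 := (dv (c1 x) w, dv (c2 x) w, dv (c3 x) w)
/-- The componentwise Laplacian `Δx` of `x : ℂ → ℝ³`. -/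
def lap3 (x : ℂ → P3) (w : ℂ) : P3 := (lapl (c1 x) w, lapl (c2 x) w, lapl (c3 x) w)

/-- Euclidean scalar product on `ℝ³`. -/
def dot3 (a b : P3) : ℝ := a.1 * b.1 + a.2.1 * b.2.1 + a.2.2 * b.2.2

/-- Cross product on `ℝ³`. -/
def cross3 (a b : P3) : P3 :=
  (a.2.1 * b.2.2 - a.2.2 * b.2.1, a.2.2 * b.1 - a.1 * b.2.2, a.1 * b.2.1 - a.2.1 * b.1)

/-- Squared Euclidean norm on `ℝ³`. -/
def normSq3 (p : P3) : ℝ := p.1 ^ 2 + p.2.1 ^ 2 + p.2.2 ^ 2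

/-- `|∇x|² = |x_u|² + |x_v|²`. -/
def gradSq (x : ℂ → P3) (w : ℂ) : ℝ := normSq3 (gradU x w) + normSq3 (gradV x w)

/-- `ψ_{p¹}`. -/
def psip1 (ψ : ℝ × ℝ → ℝ) (p : ℝ × ℝ) : ℝ := fderiv ℝ ψ p (1, 0)
/-- `ψ_{p²}`. -/
def psip2 (ψ : ℝ × ℝ → ℝ) (p : ℝ × ℝ) : ℝ := fderiv ℝ ψ p (0, 1)

/-- Divergence of a vector field `Q : ℝ³ → ℝ³`. -/
def divQ (Q : P3 → P3) (p : P3) : ℝ :=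
  fderiv ℝ (fun p => (Q p).1) p (1, 0, 0) + fderiv ℝ (fun p => (Q p).2.1) p (0, 1, 0)
    + fderiv ℝ (fun p => (Q p).2.2) p (0, 0, 1)

/-- The prescribed mean curvature `H = ½ div Q`. -/
def Hfun (Q : P3 → P3) (p : P3) : ℝ := divQ Q p / 2

/-- `q(p) = Q³(p) − ψ_{p¹}Q¹(p) − ψ_{p²}Q²(p)`. -/
def qfun (ψ : ℝ × ℝ → ℝ) (Q : P3 → P3) (p : P3) : ℝ :=
  (Q p).2.2 - psip1 ψ (p.1, p.2.1) * (Q p).1 - psip2 ψ (p.1, p.2.1) * (Q p).2.1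

/-- The tangent vector `t(s)` along the boundary curve of the support surface. -/
def tvec (γ : ℝ → ℝ) (ψ : ℝ × ℝ → ℝ) (s : ℝ) : P3 :=
  (1, deriv γ s, psip1 ψ (s, γ s) + psip2 ψ (s, γ s) * deriv γ s)

/-- The auxiliary function `z¹`. -/
def z1 (ψ : ℝ × ℝ → ℝ) (x : ℂ → P3) (w : ℂ) : ℂ :=
  -Complex.I * (psip1 ψ ((x w).1, (x w).2.1) : ℂ) * wder (c1 x) w
    - Complex.I * (psip2 ψ ((x w).1, (x w).2.1) : ℂ) * wder (c2 x) w
    + Complex.I * wder (c3 x) w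

/-- The auxiliary function `z²`. -/
def z2 (γ : ℝ → ℝ) (ψ : ℝ × ℝ → ℝ) (Q : P3 → P3) (x : ℂ → P3) (w : ℂ) : ℂ :=
  (1 - Complex.I * (Complex.ofReal (qfun ψ Q (x w))) * (Complex.ofReal (deriv γ ((x w).1)))) * wder (c1 x) w
    + ((Complex.ofReal (deriv γ ((x w).1))) + Complex.I * (Complex.ofReal (qfun ψ Q (x w)))) * wder (c2 x) w
    + ((psip1 ψ ((x w).1, (x w).2.1) : ℂ)
        + (psip2 ψ ((x w).1, (x w).2.1) : ℂ) * (Complex.ofReal (deriv γ ((x w).1)))) * wder (c3 x) w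

/-- `z = (z¹, z²)`. -/
def zpair (γ : ℝ → ℝ) (ψ : ℝ × ℝ → ℝ) (Q : P3 → P3) (x : ℂ → P3) (w : ℂ) : ℂ × ℂ :=
  (z1 ψ x w, z2 γ ψ Q x w)

/-- The reflection `ẑ` of `z` across `I`. -/
def zhat (γ : ℝ → ℝ) (ψ : ℝ × ℝ → ℝ) (Q : P3 → P3) (x : ℂ → P3) (w : ℂ) : ℂ × ℂ :=
  if 0 ≤ w.im then zpair γ ψ Q x w
  else ((starRingEnd ℂ) ((zpair γ ψ Q x ((starRingEnd ℂ) w)).1),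
        (starRingEnd ℂ) ((zpair γ ψ Q x ((starRingEnd ℂ) w)).2))

/-- The even reflection `x̂` of `x` across `I`. -/
def xhat (x : ℂ → P3) (w : ℂ) : P3 := if 0 ≤ w.im then x w else x ((starRingEnd ℂ) w)

/-- Euclidean norm on `ℂ²`. -/
def cnorm2 (p : ℂ × ℂ) : ℝ := Real.sqrt (‖p.1‖ ^ 2 + ‖p.2‖ ^ 2)

/-- Euclidean norm on `ℂ³`. -/
def cnorm3 (p : ℂ × ℂ × ℂ) : ℝ :=
  Real.sqrt (‖p.1‖ ^ 2 + ‖p.2.1‖ ^ 2 + ‖p.2.2‖ ^ 2)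

/-- The local free-boundary setting with the smallness condition, together with the
local H-surface conditions on `x`. -/
structure HSetting (q₀ ε r : ℝ) (γ : ℝ → ℝ) (ψ : ℝ × ℝ → ℝ) (Q : P3 → P3)
    (x : ℂ → P3) : Prop where
  hr : 0 < r
  hq₀ : 0 < q₀
  hq₁ : q₀ < 1
  hγ : ContDiffOn ℝ 2 γ (Icc (-r) r)
  hγ0 : γ 0 = 0
  hγ'0 : deriv γ 0 = 0
  hψ : ContDiffOn ℝ 2 ψ (closedBall (0 : ℝ × ℝ) r)
  hψ0 : ψ (0, 0) = 0
  hψ'0 : fderiv ℝ ψ (0, 0) = 0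
  hQ : ContDiff ℝ 1 Q
  hqbound : ∀ p : P3, normSq3 p ≤ r ^ 2 → |qfun ψ Q p| ≤ q₀
  hsmallγ : ∀ s ∈ Icc (-r) r, |deriv γ s| ≤ ε
  hsmallψ : ∀ p ∈ closedBall (0 : ℝ × ℝ) r, ‖fderiv ℝ ψ p‖ ≤ ε
  hx2 : ContDiffOn ℝ 2 x Bplus
  hxc : ContinuousOn x (closure Bplus)
  hxD : IntegrableOn (gradSq x) Bplus volume
  hxr : ∀ w ∈ closure Bplus, normSq3 (x w) < r ^ 2
  hx0 : x 0 = 0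
  hRellich : ∀ w ∈ Bplus, lap3 x w = (2 * Hfun Q (x w)) • cross3 (gradU x w) (gradV x w)
  hconf1 : ∀ w ∈ Bplus, normSq3 (gradU x w) = normSq3 (gradV x w)
  hconf2 : ∀ w ∈ Bplus, dot3 (gradU x w) (gradV x w) = 0
  hbd1 : ∀ w ∈ Iseg, (x w).2.2 = ψ ((x w).1, (x w).2.1)
  hbd2 : ∀ w ∈ Iseg, γ ((x w).1) ≤ (x w).2.1

/-- The stationarity boundary relation coming from the first variation of `E_Q`. -/
def StationarityRel (γ : ℝ → ℝ) (ψ : ℝ × ℝ → ℝ) (Q : P3 → P3) (x : ℂ → P3) : Prop :=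
  ∀ α : ℂ → ℝ, ContDiff ℝ 1 α → HasCompactSupport α → tsupport α ⊆ Bplus ∪ Iseg →
    Tendsto (fun ρ : ℝ => ∫ u in Irho ρ,
        α ⟨u, ρ⟩ * dot3 (tvec γ ψ ((x ⟨u, ρ⟩).1))
          (gradV x ⟨u, ρ⟩ + cross3 (Q (x ⟨u, ρ⟩)) (gradU x ⟨u, ρ⟩)))
      (𝓝[>] (0 : ℝ)) (𝓝 0)

/-- Heinz–Hildebrandt–Nitsche Lemma, part (a): if `f` is continuous on `B⁺` and `f²`
extends continuously to `B⁺ ∪ I`, then so does `f`. -/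
theorem continuous_extension_of_sq_extension (f : ℂ → ℂ)
    (hf : ContinuousOn f Bplus)
    (hsq : ∃ F : ℂ → ℂ, ContinuousOn F (Bplus ∪ Iseg) ∧ EqOn F (fun w => f w ^ 2) Bplus) :
    ∃ G : ℂ → ℂ, ContinuousOn G (Bplus ∪ Iseg) ∧ EqOn G f Bplus := by
  classical
  obtain ⟨F, hFc, hFe⟩ := hsq
  have hBopen : IsOpen Bplus :=
    (isOpen_lt continuous_norm continuous_const).inter
      (isOpen_lt continuous_const Complex.continuous_im)
  have hBconv : Convex ℝ Bplus := by
    have h : Bplus = Metric.ball (0:ℂ) 1 ∩ {w : ℂ | 0 < w.im} := by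
      ext w; simp [Bplus, Metric.mem_ball, Complex.dist_eq, and_comm]
    rw [h]
    exact (convex_ball 0 1).inter (convex_halfSpace_im_gt 0)
  have hcl : ∀ w ∈ Iseg, w ∈ closure Bplus := by
    intro w hw
    obtain ⟨him, hre⟩ := hw
    have habs : ‖w‖ < 1 := by
      have h : w = (w.re : ℂ) := Complex.ext rfl (by simp [him])
      rw [h, Complex.norm_real, Real.norm_eq_abs]; exact hre
    have ht : Tendsto (fun t : ℝ => w + t * Complex.I) (𝓝[>] 0) (𝓝 w) := by
      have hc : Continuous (fun t : ℝ => w + (t : ℂ) * Complex.I) := by continuity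
      have := hc.tendsto 0
      simpa using this.mono_left nhdsWithin_le_nhds
    refine mem_closure_of_tendsto ht ?_
    filter_upwards [Ioo_mem_nhdsGT_of_mem
      (⟨le_refl 0, by linarith⟩ : (0:ℝ) ∈ Ico 0 (1 - ‖w‖))] with t htt
    constructor
    · calc ‖w + t * Complex.I‖ ≤ ‖w‖ + ‖(t:ℂ) * Complex.I‖ :=
          norm_add_le _ _
        _ = ‖w‖ + |t| := by simp [Complex.norm_real]
        _ < 1 := by rw [abs_of_pos htt.1]; linarith [htt.2]
    · simp [Complex.add_im, him, htt.1]
  have hne : ∀ w ∈ Iseg, (𝓝[Bplus] w).NeBot := fun w hw =>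
    mem_closure_iff_nhdsWithin_neBot.mp (hcl w hw)
  have key : ∀ w₀ ∈ Iseg, ∃ L, Tendsto f (𝓝[Bplus] w₀) (𝓝 L) := by
    intro w₀ hw₀
    have hFw : Tendsto F (𝓝[Bplus] w₀) (𝓝 (F w₀)) :=
      (hFc w₀ (Or.inr hw₀)).mono_left (nhdsWithin_mono _ subset_union_left)
    have hsqF : ∀ᶠ z in 𝓝[Bplus] w₀, F z = f z ^ 2 := by
      filter_upwards [self_mem_nhdsWithin] with z hz using hFe hz
    by_cases h0 : F w₀ = 0
    · refine ⟨0, ?_⟩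
      rw [tendsto_zero_iff_norm_tendsto_zero]
      have h1 : Tendsto (fun z => ‖F z‖) (𝓝[Bplus] w₀) (𝓝 0) := by
        simpa [h0] using hFw.norm
      have h2 : Tendsto (fun z => Real.sqrt ‖F z‖) (𝓝[Bplus] w₀) (𝓝 0) := by
        simpa [Function.comp_def] using (Real.continuous_sqrt.tendsto 0).comp h1
      refine h2.congr' ?_
      filter_upwards [hsqF] with z hz
      rw [hz, norm_pow, Real.sqrt_sq (norm_nonneg _)]
    · set a := F w₀ with ha
      obtain ⟨c, hc⟩ : ∃ c : ℂ, c ^ 2 = a :=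
        ⟨a ^ (((2:ℕ):ℂ))⁻¹, by exact_mod_cast Complex.cpow_nat_inv_pow a two_ne_zero⟩
      set g : ℂ → ℂ := fun z => (F z / a) ^ (((2:ℕ):ℂ))⁻¹ * c with hg
      -- choose δ
      have hdiv : ContinuousWithinAt (fun z => F z / a) (Bplus ∪ Iseg) w₀ :=
        (hFc w₀ (Or.inr hw₀)).div_const a
      have hdiv1 : Tendsto (fun z => F z / a) (𝓝[Bplus ∪ Iseg] w₀) (𝓝 1) := by
        have := hdiv.tendsto
        rwa [show F w₀ / a = 1 from div_self h0] at this
      obtain ⟨δ, hδpos, hδ⟩ := (Metric.tendsto_nhdsWithin_nhds.mp hdiv1) 1 one_pos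
      set S : Set ℂ := Bplus ∩ Metric.ball w₀ δ with hS
      have hSsub : S ⊆ Bplus := inter_subset_left
      have hre : ∀ z ∈ S, 0 < (F z / a).re := by
        intro z hz
        have h1 : dist (F z / a) 1 < 1 :=
          hδ (Or.inl hz.1) (by simpa [Metric.mem_ball] using hz.2)
        rw [Complex.dist_eq] at h1
        have h2 : |(F z / a - 1).re| < 1 := lt_of_le_of_lt (Complex.abs_re_le_norm _) h1
        have h3 := (abs_lt.mp h2).1
        simp only [Complex.sub_re, Complex.one_re] at h3
        linarith
      have hFne : ∀ z ∈ S, F z ≠ 0 := by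
        intro z hz h
        have := hre z hz
        rw [h] at this; simp at this
      have hgsq : ∀ z ∈ S, g z ^ 2 = F z := by
        intro z hz
        have h2 : ((F z / a) ^ (((2:ℕ):ℂ))⁻¹) ^ (2:ℕ) = F z / a :=
          Complex.cpow_nat_inv_pow _ two_ne_zero
        calc g z ^ 2 = ((F z / a) ^ (((2:ℕ):ℂ))⁻¹) ^ (2:ℕ) * c ^ 2 := by rw [hg]; ring
          _ = (F z / a) * a := by rw [h2, hc]
          _ = F z := div_mul_cancel₀ _ h0
      have hgne : ∀ z ∈ S, g z ≠ 0 := by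
        intro z hz h
        exact hFne z hz (by rw [← hgsq z hz, h]; ring)
      have hgc : ContinuousOn g S :=
        (((hFc.mono (hSsub.trans subset_union_left)).div_const a).cpow_const
          (fun z hz => Or.inl (hre z hz))).mul continuousOn_const
      have hfS : ContinuousOn f S := hf.mono hSsub
      have hfg : ∀ z ∈ S, f z = g z ∨ f z = -g z := by
        intro z hz
        have hsq2 : f z ^ 2 = g z ^ 2 := by
          rw [hgsq z hz]; exact (hFe (hSsub hz)).symm
        have h1 : (f z - g z) * (f z + g z) = 0 := by linear_combination hsq2
        rcases mul_eq_zero.mp h1 with h | h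
        · left; exact sub_eq_zero.mp h
        · right; exact eq_neg_of_add_eq_zero_left h
      -- dichotomy via connectedness
      have hpre : IsPreconnected S := (hBconv.inter (convex_ball w₀ δ)).isPreconnected
      have hdich : (∀ z ∈ S, f z = g z) ∨ (∀ z ∈ S, f z = -g z) := by
        by_contra hcon
        push_neg at hcon
        obtain ⟨⟨z₁, hz₁, h₁⟩, ⟨z₂, hz₂, h₂⟩⟩ := hcon
        have hv₁ : f z₁ = -g z₁ := (hfg z₁ hz₁).resolve_left h₁
        have hv₂ : f z₂ = g z₂ := (hfg z₂ hz₂).resolve_right h₂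
        set u : ℂ → ℝ := fun z => (f z / g z).re with hu
        have huc : ContinuousOn u S :=
          Complex.continuous_re.comp_continuousOn (hfS.div hgc hgne)
        have hq₁ : f z₁ / g z₁ = -1 := by rw [hv₁, neg_div, div_self (hgne z₁ hz₁)]
        have hq₂ : f z₂ / g z₂ = 1 := by rw [hv₂, div_self (hgne z₂ hz₂)]
        have hu₁ : u z₁ = -1 := by rw [hu]; simp [hq₁]
        have hu₂ : u z₂ = 1 := by rw [hu]; simp [hq₂]
        have hle₁ : u z₁ ≤ 0 := by rw [hu₁]; norm_num
        have hle₂ : (0:ℝ) ≤ u z₂ := by rw [hu₂]; norm_num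
        obtain ⟨z, hzS, hz0⟩ := hpre.intermediate_value₂ hz₁ hz₂ huc
          (continuousOn_const (c := (0:ℝ))) hle₁ hle₂
        have hpm : u z = 1 ∨ u z = -1 := by
          rcases hfg z hzS with h | h
          · left; have hq : f z / g z = 1 := by rw [h, div_self (hgne z hzS)]
            rw [hu]; simp [hq]
          · right; have hq : f z / g z = -1 := by rw [h, neg_div, div_self (hgne z hzS)]
            rw [hu]; simp [hq]
        rcases hpm with h | h <;> rw [hz0] at h <;> norm_num at h
      -- g tends to c at w₀
      have hFn : Tendsto F (𝓝[S] w₀) (𝓝 a) := hFw.mono_left (nhdsWithin_mono _ hSsub)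
      have hgt : Tendsto g (𝓝[S] w₀) (𝓝 c) := by
        have h1 : Tendsto (fun z => F z / a) (𝓝[S] w₀) (𝓝 1) := by
          have := hFn.div_const a
          rwa [div_self h0] at this
        have h2 : ContinuousAt (fun u : ℂ => u ^ (((2:ℕ):ℂ))⁻¹) 1 :=
          continuousAt_cpow_const (Or.inl (by norm_num))
        have h3 : Tendsto (fun z => (F z / a) ^ (((2:ℕ):ℂ))⁻¹) (𝓝[S] w₀) (𝓝 (1 ^ (((2:ℕ):ℂ))⁻¹)) :=
          (h2.tendsto).comp h1
        rw [Complex.one_cpow] at h3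
        have := h3.mul_const c
        rwa [one_mul] at this
      have hrestr : 𝓝[Bplus] w₀ = 𝓝[S] w₀ :=
        nhdsWithin_restrict' Bplus (Metric.ball_mem_nhds w₀ hδpos)
      rcases hdich with h | h
      · refine ⟨c, ?_⟩
        rw [hrestr]
        refine hgt.congr' ?_
        filter_upwards [self_mem_nhdsWithin] with z hz using (h z hz).symm
      · refine ⟨-c, ?_⟩
        rw [hrestr]
        refine hgt.neg.congr' ?_
        filter_upwards [self_mem_nhdsWithin] with z hz using (h z hz).symm
  -- Definition of the extension
  set G : ℂ → ℂ := fun w => if w ∈ Bplus then f w else limUnder (𝓝[Bplus] w) f with hG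
  have hGB : ∀ w ∈ Bplus, G w = f w := fun w hw => if_pos hw
  have hIB : ∀ w ∈ Iseg, w ∉ Bplus := by
    rintro w ⟨him, -⟩ ⟨-, h⟩
    rw [him] at h; exact lt_irrefl 0 h
  have htG : ∀ w ∈ Iseg, Tendsto f (𝓝[Bplus] w) (𝓝 (G w)) := by
    intro w hw
    obtain ⟨L, hL⟩ := key w hw
    have := hne w hw
    have hlim : limUnder (𝓝[Bplus] w) f = L := hL.limUnder_eq
    rw [hG]
    simp only [if_neg (hIB w hw), hlim]
    exact hL
  refine ⟨G, ?_, fun w hw => hGB w hw⟩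
  intro w hw
  rcases hw with hw | hw
  · -- interior point
    have hfa : ContinuousAt f w := hf.continuousAt (hBopen.mem_nhds hw)
    have heq : G =ᶠ[𝓝 w] f := by
      filter_upwards [hBopen.mem_nhds hw] with z hz using hGB z hz
    exact (hfa.congr heq.symm).continuousWithinAt
  · -- boundary point
    rw [Metric.continuousWithinAt_iff]
    intro ε hε
    have hw' : w ∉ Bplus := hIB w hw
    obtain ⟨δ, hδpos, hδ⟩ := Metric.tendsto_nhdsWithin_nhds.mp (htG w hw) (ε/2) (by linarith)
    refine ⟨δ/2, by linarith, ?_⟩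
    intro z hz hzd
    rcases hz with hz | hz
    · have : dist (f z) (G w) < ε/2 := hδ hz (by linarith)
      rw [hGB z hz]
      linarith
    · -- z on the segment: pass to the limit
      have hnz := hne z hz
      have htz := htG z hz
      have hled : dist (G z) (G w) ≤ ε/2 := by
        have hdist : Tendsto (fun z' => dist (f z') (G w)) (𝓝[Bplus] z)
            (𝓝 (dist (G z) (G w))) := htz.dist tendsto_const_nhds
        refine le_of_tendsto hdist ?_
        have hball : Metric.ball z (δ/2) ∈ 𝓝[Bplus] z :=
          nhdsWithin_le_nhds (Metric.ball_mem_nhds z (by linarith))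
        filter_upwards [hball, self_mem_nhdsWithin] with z' hz' hz'B
        have h1 : dist z' w < δ := by
          have := Metric.mem_ball.mp hz'
          calc dist z' w ≤ dist z' z + dist z w := dist_triangle _ _ _
            _ < δ/2 + δ/2 := by linarith
            _ = δ := by ring
        exact le_of_lt (hδ hz'B h1)
      linarith


end
end

section
/- Let ρ₀ ∈ (0,1) and f ∈ C⁰([−ρ₀, ρ₀], ℂ) satisfy Re(f(u))·Im(f(u)) = 0 for all u ∈ [−ρ₀, ρ₀], and suppose there exist constants c > 0 and α ∈ (0,1] such that |f²(u₁) − f²(u₂)| ≤ c|u₁ − u₂|^{2α} for all u₁, u₂ ∈ [−ρ₀, ρ₀]. Then f is Hölder continuous with exponent α on [−ρ₀, ρ₀], i.e. there is a constant C > 0 with |f(u₁) − f(u₂)| ≤ C|u₁ − u₂|^α for all u₁, u₂ ∈ [−ρ₀, ρ₀]. -/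
open Complex MeasureTheory Set Metric Filter Topology

noncomputable section

lemma real_case_aux (a b : ℝ) (hab : 0 ≤ a * b) : (a - b) ^ 2 ≤ |a ^ 2 - b ^ 2| := by
  rw [show a ^ 2 - b ^ 2 = (a - b) * (a + b) by ring, _root_.abs_mul]
  have h : |a - b| ≤ |a + b| := by
    rw [← Real.sqrt_sq_eq_abs, ← Real.sqrt_sq_eq_abs]
    exact Real.sqrt_le_sqrt (by nlinarith)
  calc (a - b) ^ 2 = |a - b| * |a - b| := by
        rw [← abs_mul, _root_.abs_of_nonneg (mul_self_nonneg _)]; ring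
    _ ≤ |a - b| * |a + b| := mul_le_mul_of_nonneg_left h (abs_nonneg _)

lemma re_sq_sub (z w : ℂ) :
    (z ^ 2 - w ^ 2).re = (z.re ^ 2 - z.im ^ 2) - (w.re ^ 2 - w.im ^ 2) := by
  simp [pow_two, Complex.mul_re]

lemma cross_bound (z w : ℂ) (h : z.im = 0 ∧ w.re = 0 ∨ z.re = 0 ∧ w.im = 0) :
    ‖z‖ ^ 2 ≤ ‖z ^ 2 - w ^ 2‖ := by
  refine le_trans ?_ (Complex.abs_re_le_norm _)
  rw [Complex.sq_norm, Complex.normSq_apply, re_sq_sub]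
  rcases h with ⟨h1', h2'⟩ | ⟨h1', h2'⟩ <;> rw [h1', h2']
  · rw [show z.re ^ 2 - 0 ^ 2 - (0 ^ 2 - w.im ^ 2) = z.re ^ 2 + w.im ^ 2 by ring,
      _root_.abs_of_nonneg (by positivity)]
    nlinarith [sq_nonneg w.im]
  · rw [show 0 ^ 2 - z.im ^ 2 - (w.re ^ 2 - 0 ^ 2) = -(z.im ^ 2 + w.re ^ 2) by ring, abs_neg,
      _root_.abs_of_nonneg (by positivity)]
    nlinarith [sq_nonneg w.re]

lemma good_bound (z w : ℂ)
    (h : z.im = 0 ∧ w.im = 0 ∧ 0 ≤ z.re * w.re ∨ z.re = 0 ∧ w.re = 0 ∧ 0 ≤ z.im * w.im ∨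
      z.im = 0 ∧ w.re = 0 ∨ z.re = 0 ∧ w.im = 0) :
    ‖z - w‖ ^ 2 ≤ ‖z ^ 2 - w ^ 2‖ := by
  refine le_trans ?_ (Complex.abs_re_le_norm _)
  rw [Complex.sq_norm, Complex.normSq_apply, Complex.sub_re, Complex.sub_im, re_sq_sub]
  rcases h with ⟨h1', h2', h3'⟩ | ⟨h1', h2', h3'⟩ | ⟨h1', h2'⟩ | ⟨h1', h2'⟩ <;> rw [h1', h2']
  · rw [show z.re ^ 2 - 0 ^ 2 - (w.re ^ 2 - 0 ^ 2) = z.re ^ 2 - w.re ^ 2 by ring]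
    nlinarith [real_case_aux z.re w.re h3']
  · rw [show (0:ℝ) ^ 2 - z.im ^ 2 - (0 ^ 2 - w.im ^ 2) = -(z.im ^ 2 - w.im ^ 2) by ring, abs_neg]
    nlinarith [real_case_aux z.im w.im h3']
  · rw [show z.re ^ 2 - 0 ^ 2 - (0 ^ 2 - w.im ^ 2) = z.re ^ 2 + w.im ^ 2 by ring,
      _root_.abs_of_nonneg (by positivity)]
    nlinarith
  · rw [show 0 ^ 2 - z.im ^ 2 - (w.re ^ 2 - 0 ^ 2) = -(z.im ^ 2 + w.re ^ 2) by ring, abs_neg,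
      _root_.abs_of_nonneg (by positivity)]
    nlinarith

lemma dist_in_uIcc {u₁ u₂ u₃ : ℝ} (hm : u₃ ∈ uIcc u₁ u₂) :
    |u₁ - u₃| ≤ |u₁ - u₂| ∧ |u₂ - u₃| ≤ |u₁ - u₂| := by
  rw [Set.mem_uIcc] at hm
  constructor <;> rw [abs_sub_le_iff] <;> constructor <;>
    rcases hm with ⟨ha, hb⟩ | ⟨ha, hb⟩ <;>
    cases abs_cases (u₁ - u₂) with
    | inl h => linarith [h.1, h.2]
    | inr h => linarith [h.1, h.2]

/-- Heinz–Hildebrandt–Nitsche Lemma, part (b): a continuous function with real·imaginary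
part vanishing, whose square is `2α`-Hölder, is itself `α`-Hölder. -/
theorem holder_of_sq_holder (ρ₀ : ℝ) (hρ₀ : 0 < ρ₀) (hρ₁ : ρ₀ < 1) (f : ℝ → ℂ)
    (hf : ContinuousOn f (Icc (-ρ₀) ρ₀))
    (hri : ∀ u ∈ Icc (-ρ₀) ρ₀, (f u).re * (f u).im = 0)
    (c α : ℝ) (hc : 0 < c) (hα0 : 0 < α) (hα1 : α ≤ 1)
    (hsq : ∀ u₁ ∈ Icc (-ρ₀) ρ₀, ∀ u₂ ∈ Icc (-ρ₀) ρ₀,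
      ‖f u₁ ^ 2 - f u₂ ^ 2‖ ≤ c * |u₁ - u₂| ^ (2 * α)) :
    ∃ C > 0, ∀ u₁ ∈ Icc (-ρ₀) ρ₀, ∀ u₂ ∈ Icc (-ρ₀) ρ₀,
      ‖f u₁ - f u₂‖ ≤ C * |u₁ - u₂| ^ α := by
  refine ⟨2 * Real.sqrt c, by positivity, ?_⟩
  intro u₁ hu₁ u₂ hu₂
  set d : ℝ := |u₁ - u₂| ^ α with hd
  have hd0 : 0 ≤ d := Real.rpow_nonneg (abs_nonneg _) _
  set M : ℝ := Real.sqrt c * d with hM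
  have hM0 : 0 ≤ M := mul_nonneg (Real.sqrt_nonneg _) hd0
  have hkey : c * |u₁ - u₂| ^ (2 * α) = M ^ 2 := by
    have h2 : |u₁ - u₂| ^ ((2 : ℝ) * α) = d ^ 2 := by
      rw [hd, show (2 : ℝ) * α = α * 2 by ring, Real.rpow_mul (abs_nonneg _),
        show ((2 : ℝ)) = ((2 : ℕ) : ℝ) by norm_num, Real.rpow_natCast]
    rw [h2, hM, mul_pow, Real.sq_sqrt hc.le]
  have habs2M : 2 * Real.sqrt c * |u₁ - u₂| ^ α = 2 * M := by rw [hM]; ring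
  rw [habs2M]
  -- a finishing move for the "good" cases
  have goodfinish :
      ((f u₁).im = 0 ∧ (f u₂).im = 0 ∧ 0 ≤ (f u₁).re * (f u₂).re ∨
        (f u₁).re = 0 ∧ (f u₂).re = 0 ∧ 0 ≤ (f u₁).im * (f u₂).im ∨
        (f u₁).im = 0 ∧ (f u₂).re = 0 ∨ (f u₁).re = 0 ∧ (f u₂).im = 0) →
      ‖f u₁ - f u₂‖ ≤ 2 * M := by
    intro h
    have h2 : ‖f u₁ - f u₂‖ ^ 2 ≤ M ^ 2 :=
      (good_bound (f u₁) (f u₂) h).trans ((hsq u₁ hu₁ u₂ hu₂).trans_eq hkey)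
    nlinarith [norm_nonneg (f u₁ - f u₂), hM0]
  -- a finishing move for the "bad" cases, given a zero-crossing point u₃
  have badfinish : ∀ u₃ ∈ uIcc u₁ u₂,
      ((f u₁).im = 0 ∧ (f u₃).re = 0 ∨ (f u₁).re = 0 ∧ (f u₃).im = 0) →
      ((f u₂).im = 0 ∧ (f u₃).re = 0 ∨ (f u₂).re = 0 ∧ (f u₃).im = 0) →
      ‖f u₁ - f u₂‖ ≤ 2 * M := by
    intro u₃ hm hcr1 hcr2
    have hu₃ : u₃ ∈ Icc (-ρ₀) ρ₀ := by
      have : uIcc u₁ u₂ ⊆ Icc (-ρ₀) ρ₀ := uIcc_subset_Icc hu₁ hu₂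
      exact this hm
    obtain ⟨hd1, hd2⟩ := dist_in_uIcc hm
    have hmono : ∀ a : ℝ, |a| ≤ |u₁ - u₂| → c * |a| ^ (2 * α) ≤ M ^ 2 := by
      intro a ha
      rw [← hkey]
      exact mul_le_mul_of_nonneg_left
        (Real.rpow_le_rpow (abs_nonneg _) (by simpa using ha) (by positivity)) hc.le
    have b1 : ‖f u₁‖ ≤ M := by
      have : ‖f u₁‖ ^ 2 ≤ M ^ 2 :=
        (cross_bound _ _ hcr1).trans ((hsq u₁ hu₁ u₃ hu₃).trans
          (hmono _ (by simpa using hd1)))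
      nlinarith [norm_nonneg (f u₁), hM0]
    have b2 : ‖f u₂‖ ≤ M := by
      have : ‖f u₂‖ ^ 2 ≤ M ^ 2 :=
        (cross_bound _ _ hcr2).trans ((hsq u₂ hu₂ u₃ hu₃).trans
          (hmono _ (by simpa using hd2)))
      nlinarith [norm_nonneg (f u₂), hM0]
    calc ‖f u₁ - f u₂‖ ≤ ‖f u₁‖ + ‖f u₂‖ := by
          simpa using norm_sub_le (f u₁) (f u₂)
      _ ≤ 2 * M := by linarith
  have hsub : uIcc u₁ u₂ ⊆ Icc (-ρ₀) ρ₀ := uIcc_subset_Icc hu₁ hu₂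
  rcases mul_eq_zero.1 (hri u₁ hu₁) with hz | hz <;>
    rcases mul_eq_zero.1 (hri u₂ hu₂) with hw | hw
  · -- both re = 0
    rcases lt_or_ge ((f u₁).im * (f u₂).im) 0 with hlt | hge
    · have hcont : ContinuousOn (fun u => (f u).im) (uIcc u₁ u₂) :=
        Complex.continuous_im.comp_continuousOn (hf.mono hsub)
      have h0 : (0 : ℝ) ∈ uIcc ((f u₁).im) ((f u₂).im) := by
        rcases mul_neg_iff.1 hlt with ⟨h1, h2⟩ | ⟨h1, h2⟩ <;> rw [Set.mem_uIcc]
        · exact Or.inr ⟨h2.le, h1.le⟩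
        · exact Or.inl ⟨h1.le, h2.le⟩
      obtain ⟨u₃, hm3, h3⟩ := intermediate_value_uIcc hcont h0
      exact badfinish u₃ hm3 (Or.inr ⟨hz, h3⟩) (Or.inr ⟨hw, h3⟩)
    · exact goodfinish (Or.inr (Or.inl ⟨hz, hw, hge⟩))
  · exact goodfinish (Or.inr (Or.inr (Or.inr ⟨hz, hw⟩)))
  · exact goodfinish (Or.inr (Or.inr (Or.inl ⟨hz, hw⟩)))
  · -- both im = 0
    rcases lt_or_ge ((f u₁).re * (f u₂).re) 0 with hlt | hge
    · have hcont : ContinuousOn (fun u => (f u).re) (uIcc u₁ u₂) :=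
        Complex.continuous_re.comp_continuousOn (hf.mono hsub)
      have h0 : (0 : ℝ) ∈ uIcc ((f u₁).re) ((f u₂).re) := by
        rcases mul_neg_iff.1 hlt with ⟨h1, h2⟩ | ⟨h1, h2⟩ <;> rw [Set.mem_uIcc]
        · exact Or.inr ⟨h2.le, h1.le⟩
        · exact Or.inl ⟨h1.le, h2.le⟩
      obtain ⟨u₃, hm3, h3⟩ := intermediate_value_uIcc hcont h0
      exact badfinish u₃ hm3 (Or.inl ⟨hz, h3⟩) (Or.inl ⟨hw, h3⟩)
    · exact goodfinish (Or.inl ⟨hz, hw, hge⟩)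


end
end

section
/- Let ψ : closure(B_r(0)) ⊂ ℝ² → ℝ be Lipschitz continuous with |∇ψ| ≤ L, and let x = (x¹,x²,x³) ∈ C¹(B⁺, ℝ³) ∩ C⁰(closure(B⁺), ℝ³) have finite Dirichlet integral ∫_{B⁺}|∇x|² du dv < ∞, take values with |x(w)| < r, and satisfy x³ = ψ(x¹,x²) on I. Then there is a constant c > 0 depending only on L such that for every ρ ∈ (0,1): ∫_{I_ρ} [x³ − ψ(x¹,x²)]² du ≤ c ρ ∫_{B⁺} |∇x|² du dv. -/
open Complex MeasureTheory Set Metric Filter Topology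

noncomputable section

section AuxProof

lemma aux_Bplus_open : IsOpen Bplus := by
  have : Bplus = {w : ℂ | ‖w‖ < 1} ∩ {w : ℂ | 0 < w.im} := rfl
  rw [this]
  exact (isOpen_lt continuous_norm continuous_const).inter
    (isOpen_lt continuous_const Complex.continuous_im)

lemma mem_Bplus_mk {u v : ℝ} : (⟨u, v⟩ : ℂ) ∈ Bplus ↔ u ^ 2 + v ^ 2 < 1 ∧ 0 < v := by
  have h1 : ‖(⟨u, v⟩ : ℂ)‖ < 1 ↔ u ^ 2 + v ^ 2 < 1 := by
    have hsq : ‖(⟨u, v⟩ : ℂ)‖ ^ 2 = u ^ 2 + v ^ 2 := by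
      rw [Complex.sq_norm]; simp [Complex.normSq_mk]; ring
    constructor
    · intro h; nlinarith [norm_nonneg (⟨u, v⟩ : ℂ)]
    · intro h; nlinarith [norm_nonneg (⟨u, v⟩ : ℂ)]
  constructor
  · rintro ⟨h1', h2⟩; exact ⟨h1.1 h1', h2⟩
  · rintro ⟨h1', h2⟩; exact ⟨h1.2 h1', h2⟩

lemma aux_mem_closure {u v ρ : ℝ} (hρ : 0 < ρ) (h : u ^ 2 + ρ ^ 2 < 1) (hv : v ∈ Icc 0 ρ) :
    (⟨u, v⟩ : ℂ) ∈ closure Bplus := by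
  rcases hv.1.eq_or_lt with h0 | h0
  · have htend : Tendsto (fun t : ℝ => (⟨u, t⟩ : ℂ)) (𝓝[>] 0) (𝓝 (⟨u, v⟩ : ℂ)) := by
      rw [← h0]
      have hc : Continuous (fun t : ℝ => (⟨u, t⟩ : ℂ)) := by
        simp only [Complex.mk_eq_add_mul_I]
        continuity
      exact (hc.tendsto 0).mono_left nhdsWithin_le_nhds
    refine mem_closure_of_tendsto htend ?_
    filter_upwards [Ioo_mem_nhdsGT_of_mem (Set.left_mem_Ico.2 hρ)] with t ht
    exact mem_Bplus_mk.2 ⟨by nlinarith [ht.1, ht.2], ht.1⟩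
  · apply subset_closure
    exact mem_Bplus_mk.2 ⟨by nlinarith [hv.2], h0⟩

lemma aux_path_hasDerivAt (u v : ℝ) :
    HasDerivAt (fun t : ℝ => (⟨u, t⟩ : ℂ)) Complex.I v := by
  have : (fun t : ℝ => (⟨u, t⟩ : ℂ)) = fun t : ℝ => (u : ℂ) + (t : ℂ) * Complex.I := by
    funext t; rw [Complex.mk_eq_add_mul_I]
  rw [this]
  have h1 : HasDerivAt (fun t : ℝ => (t : ℂ)) 1 v := by
    simpa using (hasDerivAt_id v).ofReal_comp
  simpa using (h1.mul_const Complex.I).const_add (u : ℂ)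

lemma aux_ftc {f : ℂ → ℝ} {u ρ : ℝ} (hρ : 0 < ρ) (h : u ^ 2 + ρ ^ 2 < 1)
    (hc : ContinuousOn f (closure Bplus))
    (hd : ∀ w ∈ Bplus, DifferentiableAt ℝ f w)
    (hi : IntervalIntegrable (fun v => dv f ⟨u, v⟩) volume 0 ρ) :
    f ⟨u, ρ⟩ - f ⟨u, 0⟩ = ∫ v in (0:ℝ)..ρ, dv f ⟨u, v⟩ := by
  have hcont : ContinuousOn (fun v : ℝ => f ⟨u, v⟩) (Icc 0 ρ) := by
    apply hc.comp
    · have : Continuous (fun t : ℝ => (⟨u, t⟩ : ℂ)) := by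
        simp only [Complex.mk_eq_add_mul_I]; continuity
      exact this.continuousOn
    · intro v hv; exact aux_mem_closure hρ h hv
  have hderiv : ∀ v ∈ Ioo 0 ρ, HasDerivWithinAt (fun v : ℝ => f ⟨u, v⟩)
      (dv f ⟨u, v⟩) (Ioi v) v := by
    intro v hv
    have hw : (⟨u, v⟩ : ℂ) ∈ Bplus := mem_Bplus_mk.2 ⟨by nlinarith [hv.1, hv.2], hv.1⟩
    have hdf := (hd _ hw).hasFDerivAt
    exact ((hdf.comp_hasDerivAt v (aux_path_hasDerivAt u v))).hasDerivWithinAt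
  exact (intervalIntegral.integral_eq_sub_of_hasDeriv_right_of_le hρ.le hcont hderiv hi).symm

lemma aux_gradSq_nonneg (x : ℂ → P3) (w : ℂ) : 0 ≤ gradSq x w := by
  unfold gradSq normSq3; positivity

lemma aux_gradSq_meas (x : ℂ → P3) : Measurable (gradSq x) := by
  have m1 := measurable_fderiv_apply_const ℝ (c1 x) (1 : ℂ)
  have m2 := measurable_fderiv_apply_const ℝ (c2 x) (1 : ℂ)
  have m3 := measurable_fderiv_apply_const ℝ (c3 x) (1 : ℂ)
  have m4 := measurable_fderiv_apply_const ℝ (c1 x) Complex.I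
  have m5 := measurable_fderiv_apply_const ℝ (c2 x) Complex.I
  have m6 := measurable_fderiv_apply_const ℝ (c3 x) Complex.I
  unfold gradSq normSq3 gradU gradV du dv
  exact (((m1.pow_const 2).add (m2.pow_const 2)).add (m3.pow_const 2)).add
    (((m4.pow_const 2).add (m5.pow_const 2)).add (m6.pow_const 2))

lemma aux_path_meas (u : ℝ) : Measurable (fun v : ℝ => (⟨u, v⟩ : ℂ)) := by
  have : Continuous (fun t : ℝ => (⟨u, t⟩ : ℂ)) := by
    simp only [Complex.mk_eq_add_mul_I]; continuity
  exact this.measurable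

lemma aux_dv_sq_le (x : ℂ → P3) (w : ℂ) :
    (dv (c1 x) w) ^ 2 ≤ gradSq x w ∧ (dv (c2 x) w) ^ 2 ≤ gradSq x w ∧
      (dv (c3 x) w) ^ 2 ≤ gradSq x w := by
  unfold gradSq normSq3 gradU gradV
  refine ⟨?_, ?_, ?_⟩ <;> nlinarith [sq_nonneg (du (c1 x) w), sq_nonneg (du (c2 x) w),
    sq_nonneg (du (c3 x) w), sq_nonneg (dv (c1 x) w), sq_nonneg (dv (c2 x) w),
    sq_nonneg (dv (c3 x) w)]

lemma aux_sqrt_integrable {g : ℝ → ℝ} {ρ : ℝ}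
    (hg0 : ∀ v, 0 ≤ g v) (hm : Measurable g) (hsl : IntegrableOn g (Ioo 0 ρ)) :
    IntegrableOn (fun v => Real.sqrt (g v)) (Ioo 0 ρ) := by
  have hmaj : IntegrableOn (fun v => 1 + g v) (Ioo 0 ρ) := by
    exact (integrableOn_const measure_Ioo_lt_top.ne (by simp)).add hsl
  refine hmaj.integrable.mono' ((Real.continuous_sqrt.measurable.comp hm).aestronglyMeasurable) ?_
  filter_upwards with v
  rw [Real.norm_eq_abs, _root_.abs_of_nonneg (Real.sqrt_nonneg _)]
  nlinarith [Real.sq_sqrt (hg0 v), Real.sqrt_nonneg (g v)]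

lemma aux_key {L r ρ : ℝ} (hL : 0 ≤ L) (hr : 0 < r) (ψ : ℝ × ℝ → ℝ) (x : ℂ → P3)
    (hψ : LipschitzOnWith (Real.toNNReal L) ψ (closedBall (0 : ℝ × ℝ) r))
    (hx1 : ContDiffOn ℝ 1 x Bplus) (hxc : ContinuousOn x (closure Bplus))
    (hxr : ∀ w ∈ closure Bplus, normSq3 (x w) < r ^ 2)
    (hbd : ∀ w ∈ Iseg, (x w).2.2 = ψ ((x w).1, (x w).2.1))
    (hρ0 : 0 < ρ) (hu2 : u ^ 2 + ρ ^ 2 < 1)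
    (hsl : IntegrableOn (fun v => gradSq x ⟨u, v⟩) (Ioo 0 ρ)) :
    ((x ⟨u, ρ⟩).2.2 - ψ ((x ⟨u, ρ⟩).1, (x ⟨u, ρ⟩).2.1)) ^ 2
      ≤ (1 + L) ^ 2 * (ρ * ∫ v in Ioo 0 ρ, gradSq x ⟨u, v⟩) := by
  set g : ℝ → ℝ := fun v => gradSq x ⟨u, v⟩ with hgdef
  have hg0 : ∀ v, 0 ≤ g v := fun v => aux_gradSq_nonneg x _
  have hgm : Measurable g := (aux_gradSq_meas x).comp (aux_path_meas u)
  set G : ℝ := ∫ v in Ioo 0 ρ, g v with hGdef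
  have hG0 : 0 ≤ G := setIntegral_nonneg measurableSet_Ioo fun v _ => hg0 v
  have hsqrtInt : IntegrableOn (fun v => Real.sqrt (g v)) (Ioo 0 ρ) :=
    aux_sqrt_integrable hg0 hgm hsl
  have hII : ∀ {f : ℝ → ℝ}, IntegrableOn f (Ioo 0 ρ) → IntervalIntegrable f volume 0 ρ := by
    intro f hf
    rw [intervalIntegrable_iff_integrableOn_Ioo_of_le hρ0.le]; exact hf
  have hsqrtII : IntervalIntegrable (fun v => Real.sqrt (g v)) volume 0 ρ := hII hsqrtInt
  set A : ℝ := ∫ v in (0:ℝ)..ρ, Real.sqrt (g v) with hAdef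
  have hA0 : 0 ≤ A :=
    intervalIntegral.integral_nonneg hρ0.le fun v _ => Real.sqrt_nonneg _
  -- differentiability of x inside Bplus
  have hdx : ∀ w ∈ Bplus, DifferentiableAt ℝ x w := fun w hw =>
    ((hx1.differentiableOn one_ne_zero) w hw).differentiableAt (aux_Bplus_open.mem_nhds hw)
  -- component bounds
  have hcomp : ∀ f : ℂ → ℝ, ContinuousOn f (closure Bplus) →
      (∀ w ∈ Bplus, DifferentiableAt ℝ f w) →
      (∀ w, (dv f w) ^ 2 ≤ gradSq x w) →
      |f ⟨u, ρ⟩ - f ⟨u, 0⟩| ≤ A := by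
    intro f hfc hfd hfb
    have habs : ∀ w, |dv f w| ≤ Real.sqrt (gradSq x w) := by
      intro w
      rw [← Real.sqrt_sq_eq_abs]
      exact Real.sqrt_le_sqrt (hfb w)
    have hmeas : Measurable (fun v : ℝ => dv f ⟨u, v⟩) :=
      (measurable_fderiv_apply_const ℝ f Complex.I).comp (aux_path_meas u)
    have hint : IntegrableOn (fun v : ℝ => dv f ⟨u, v⟩) (Ioo 0 ρ) := by
      refine hsqrtInt.integrable.mono' hmeas.aestronglyMeasurable ?_
      filter_upwards with v
      rw [Real.norm_eq_abs]
      exact habs _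
    have hintII := hII hint
    rw [aux_ftc hρ0 hu2 hfc hfd hintII]
    calc |∫ v in (0:ℝ)..ρ, dv f ⟨u, v⟩| ≤ ∫ v in (0:ℝ)..ρ, |dv f ⟨u, v⟩| :=
          intervalIntegral.abs_integral_le_integral_abs hρ0.le
      _ ≤ A := by
          refine intervalIntegral.integral_mono_on hρ0.le hintII.abs hsqrtII ?_
          intro v _; exact habs _
  have hc1 : |(x ⟨u, ρ⟩).1 - (x ⟨u, 0⟩).1| ≤ A :=
    hcomp (c1 x) hxc.fst (fun w hw => (hdx w hw).fst) (fun w => (aux_dv_sq_le x w).1)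
  have hc2 : |(x ⟨u, ρ⟩).2.1 - (x ⟨u, 0⟩).2.1| ≤ A :=
    hcomp (c2 x) hxc.snd.fst (fun w hw => (hdx w hw).snd.fst)
      (fun w => (aux_dv_sq_le x w).2.1)
  have hc3 : |(x ⟨u, ρ⟩).2.2 - (x ⟨u, 0⟩).2.2| ≤ A :=
    hcomp (c3 x) hxc.snd.snd (fun w hw => (hdx w hw).snd.snd)
      (fun w => (aux_dv_sq_le x w).2.2)
  -- boundary condition at v = 0
  have hu1 : |u| < 1 := by nlinarith [_root_.sq_abs u, abs_nonneg u, sq_nonneg ρ]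
  have hIseg : (⟨u, 0⟩ : ℂ) ∈ Iseg := ⟨rfl, hu1⟩
  have h0 : (x ⟨u, 0⟩).2.2 = ψ ((x ⟨u, 0⟩).1, (x ⟨u, 0⟩).2.1) := hbd _ hIseg
  -- membership in the closed ball
  have hball : ∀ w ∈ closure Bplus, ((x w).1, (x w).2.1) ∈ closedBall (0 : ℝ × ℝ) r := by
    intro w hw
    have := hxr w hw
    unfold normSq3 at this
    rw [mem_closedBall_zero_iff, Prod.norm_def]
    have h1 : |(x w).1| ≤ r := by
      rw [← Real.sqrt_sq_eq_abs, ← Real.sqrt_sq hr.le]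
      exact Real.sqrt_le_sqrt (by nlinarith [sq_nonneg (x w).2.1, sq_nonneg (x w).2.2])
    have h2 : |(x w).2.1| ≤ r := by
      rw [← Real.sqrt_sq_eq_abs, ← Real.sqrt_sq hr.le]
      exact Real.sqrt_le_sqrt (by nlinarith [sq_nonneg (x w).1, sq_nonneg (x w).2.2])
    exact max_le h1 h2
  have hwρ : (⟨u, ρ⟩ : ℂ) ∈ closure Bplus :=
    aux_mem_closure hρ0 hu2 ⟨hρ0.le, le_rfl⟩
  have hw0 : (⟨u, 0⟩ : ℂ) ∈ closure Bplus :=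
    aux_mem_closure hρ0 hu2 ⟨le_rfl, hρ0.le⟩
  -- Lipschitz estimate
  have hLip : |ψ ((x ⟨u, ρ⟩).1, (x ⟨u, ρ⟩).2.1) - ψ ((x ⟨u, 0⟩).1, (x ⟨u, 0⟩).2.1)| ≤ L * A := by
    have hd := hψ.dist_le_mul _ (hball _ hwρ) _ (hball _ hw0)
    rw [Real.dist_eq, Prod.dist_eq, Real.coe_toNNReal L hL] at hd
    refine hd.trans ?_
    have : max (dist (x ⟨u, ρ⟩).1 (x ⟨u, 0⟩).1) (dist (x ⟨u, ρ⟩).2.1 (x ⟨u, 0⟩).2.1) ≤ A := by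
      refine max_le ?_ ?_
      · rw [Real.dist_eq]; exact hc1
      · rw [Real.dist_eq]; exact hc2
    exact mul_le_mul_of_nonneg_left this hL
  -- assemble
  have hφ : |(x ⟨u, ρ⟩).2.2 - ψ ((x ⟨u, ρ⟩).1, (x ⟨u, ρ⟩).2.1)| ≤ (1 + L) * A := by
    have heq : (x ⟨u, ρ⟩).2.2 - ψ ((x ⟨u, ρ⟩).1, (x ⟨u, ρ⟩).2.1)
        = ((x ⟨u, ρ⟩).2.2 - (x ⟨u, 0⟩).2.2)
          - (ψ ((x ⟨u, ρ⟩).1, (x ⟨u, ρ⟩).2.1) - ψ ((x ⟨u, 0⟩).1, (x ⟨u, 0⟩).2.1)) := by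
      rw [h0]; ring
    rw [heq]
    calc |_ - _| ≤ |(x ⟨u, ρ⟩).2.2 - (x ⟨u, 0⟩).2.2|
          + |ψ ((x ⟨u, ρ⟩).1, (x ⟨u, ρ⟩).2.1) - ψ ((x ⟨u, 0⟩).1, (x ⟨u, 0⟩).2.1)| :=
        abs_sub _ _
      _ ≤ A + L * A := add_le_add hc3 hLip
      _ = (1 + L) * A := by ring
  -- Cauchy-Schwarz via AM-GM : A ^ 2 ≤ ρ * G
  have hCS : A ^ 2 ≤ ρ * G := by
    rcases hG0.eq_or_lt with hGz | hGpos
    · have hae : g =ᵐ[volume.restrict (Ioo 0 ρ)] 0 := by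
        rw [← integral_eq_zero_iff_of_nonneg (fun v => hg0 v) hsl.integrable]
        exact hGz.symm
      have hA : A = 0 := by
        rw [hAdef, intervalIntegral.integral_of_le hρ0.le,
          MeasureTheory.integral_Ioc_eq_integral_Ioo]
        refine integral_eq_zero_of_ae ?_
        filter_upwards [hae] with v hv
        simp [hv]
      rw [hA, ← hGz]; simp
    · set t : ℝ := Real.sqrt (G / ρ) with htdef
      have htpos : 0 < t := Real.sqrt_pos.2 (div_pos hGpos hρ0)
      have ht2 : t ^ 2 = G / ρ := Real.sq_sqrt (div_pos hGpos hρ0).le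
      have hGt : G = ρ * t ^ 2 := by
        rw [ht2]; field_simp
      have hpt : ∀ v, Real.sqrt (g v) ≤ t / 2 + g v / (2 * t) := by
        intro v
        have h1 := Real.sq_sqrt (hg0 v)
        have h2 := Real.sqrt_nonneg (g v)
        have hkey : 2 * t * Real.sqrt (g v) ≤ t ^ 2 + g v := by
          nlinarith [sq_nonneg (Real.sqrt (g v) - t)]
        have h2t : (0:ℝ) < 2 * t := by linarith
        calc Real.sqrt (g v) = 2 * t * Real.sqrt (g v) / (2 * t) := by field_simp
          _ ≤ (t ^ 2 + g v) / (2 * t) := by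
              exact div_le_div_of_nonneg_right hkey h2t.le |>.trans_eq rfl
          _ = t / 2 + g v / (2 * t) := by field_simp
      have hgII : IntervalIntegrable g volume 0 ρ := hII hsl
      have hmajII : IntervalIntegrable (fun v => t / 2 + g v / (2 * t)) volume 0 ρ :=
        intervalIntegrable_const.add (hgII.div_const _)
      have hAle : A ≤ ρ * (t / 2) + G / (2 * t) := by
        have h1 : A ≤ ∫ v in (0:ℝ)..ρ, (t / 2 + g v / (2 * t)) :=
          intervalIntegral.integral_mono_on hρ0.le hsqrtII hmajII fun v _ => hpt v
        have h2 : ∫ v in (0:ℝ)..ρ, (t / 2 + g v / (2 * t))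
            = ρ * (t / 2) + G / (2 * t) := by
          rw [intervalIntegral.integral_add intervalIntegrable_const (hgII.div_const _),
            intervalIntegral.integral_const, intervalIntegral.integral_div,
            intervalIntegral.integral_of_le hρ0.le,
            MeasureTheory.integral_Ioc_eq_integral_Ioo]
          simp [smul_eq_mul]; rfl
        linarith [h1, h2.le, h2.ge]
      have hM : (ρ * (t / 2) + G / (2 * t)) ^ 2 = ρ * G := by
        rw [hGt]
        field_simp
        ring
      calc A ^ 2 ≤ (ρ * (t / 2) + G / (2 * t)) ^ 2 := by
            have hMnn : 0 ≤ ρ * (t / 2) + G / (2 * t) := hA0.trans hAle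
            exact pow_le_pow_left₀ hA0 hAle 2
        _ = ρ * G := hM
  calc ((x ⟨u, ρ⟩).2.2 - ψ ((x ⟨u, ρ⟩).1, (x ⟨u, ρ⟩).2.1)) ^ 2
      = |(x ⟨u, ρ⟩).2.2 - ψ ((x ⟨u, ρ⟩).1, (x ⟨u, ρ⟩).2.1)| ^ 2 := (_root_.sq_abs _).symm
    _ ≤ ((1 + L) * A) ^ 2 := pow_le_pow_left₀ (abs_nonneg _) hφ 2
    _ = (1 + L) ^ 2 * A ^ 2 := by ring
    _ ≤ (1 + L) ^ 2 * (ρ * G) := by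
        exact mul_le_mul_of_nonneg_left hCS (by positivity)

end AuxProof

/-- The boundary integral estimate (1.13): for a map vanishing against the graph of a
Lipschitz `ψ` on `I`, the squared boundary defect on `I_ρ` is `O(ρ)` times the Dirichlet
integral, with a constant depending only on the Lipschitz bound `L`. -/
theorem boundary_defect_estimate (L : ℝ) (hL : 0 ≤ L) :
    ∃ c > 0, ∀ (r : ℝ) (ψ : ℝ × ℝ → ℝ) (x : ℂ → P3),
      0 < r →
      LipschitzOnWith (Real.toNNReal L) ψ (closedBall (0 : ℝ × ℝ) r) →
      ContDiffOn ℝ 1 x Bplus →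
      ContinuousOn x (closure Bplus) →
      IntegrableOn (gradSq x) Bplus volume →
      (∀ w ∈ closure Bplus, normSq3 (x w) < r ^ 2) →
      (∀ w ∈ Iseg, (x w).2.2 = ψ ((x w).1, (x w).2.1)) →
      ∀ ρ : ℝ, 0 < ρ → ρ < 1 →
        (∫ u in Irho ρ, ((x ⟨u, ρ⟩).2.2 - ψ ((x ⟨u, ρ⟩).1, (x ⟨u, ρ⟩).2.1)) ^ 2)
          ≤ c * ρ * ∫ w in Bplus, gradSq x w := by
  refine ⟨(1 + L) ^ 2, by positivity, ?_⟩
  intro r ψ x hr hψ hx1 hxc hxD hxr hbd ρ hρ0 hρ1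
  classical
  set e := Complex.measurableEquivRealProd with hedef
  have me : MeasurePreserving e.symm volume volume :=
    Complex.volume_preserving_equiv_real_prod.symm
  have emb : MeasurableEmbedding e.symm := e.symm.measurableEmbedding
  have hsymm : ∀ p : ℝ × ℝ, e.symm p = (⟨p.1, p.2⟩ : ℂ) := by
    rintro ⟨a, b⟩
    simp [hedef, Complex.measurableEquivRealProd]
    rfl
  set G : ℝ × ℝ → ℝ := fun p => gradSq x ⟨p.1, p.2⟩ with hGdef
  have hBmeas : MeasurableSet Bplus := aux_Bplus_open.measurableSet
  set B₂ : Set (ℝ × ℝ) := e.symm ⁻¹' Bplus with hB₂def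
  have hB₂meas : MeasurableSet B₂ := e.symm.measurable hBmeas
  -- transfer integrability
  have hInt : IntegrableOn G B₂ volume := by
    have h1 : Integrable (Bplus.indicator (gradSq x)) volume :=
      (integrable_indicator_iff hBmeas).2 hxD
    have h2 : Integrable ((Bplus.indicator (gradSq x)) ∘ e.symm) volume :=
      (me.integrable_comp_emb emb).2 h1
    have h3 : (Bplus.indicator (gradSq x)) ∘ e.symm = B₂.indicator G := by
      funext p
      have hmem : p ∈ B₂ ↔ (⟨p.1, p.2⟩ : ℂ) ∈ Bplus := by
        rw [hB₂def, mem_preimage, hsymm p]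
      by_cases hp : (⟨p.1, p.2⟩ : ℂ) ∈ Bplus
      · rw [Function.comp_apply, hsymm p, Set.indicator_of_mem hp,
          Set.indicator_of_mem (hmem.2 hp)]
      · rw [Function.comp_apply, hsymm p, Set.indicator_of_notMem hp,
          Set.indicator_of_notMem (fun h => hp (hmem.1 h))]
    rw [h3] at h2
    exact (integrable_indicator_iff hB₂meas).1 h2
  -- the rectangle
  have hpathc : Continuous (fun t : ℝ => (⟨t, ρ⟩ : ℂ)) := by
    simp only [Complex.mk_eq_add_mul_I]; continuity
  have hIρmeas : MeasurableSet (Irho ρ) :=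
    (aux_Bplus_open.preimage hpathc).measurableSet
  set R : Set (ℝ × ℝ) := (Irho ρ) ×ˢ (Ioo 0 ρ) with hRdef
  have hRmeas : MeasurableSet R := hIρmeas.prod measurableSet_Ioo
  have hRB : R ⊆ B₂ := by
    rintro ⟨a, b⟩ ⟨ha, hb⟩
    have ha2 : a ^ 2 + ρ ^ 2 < 1 ∧ 0 < ρ := mem_Bplus_mk.1 ha
    have : (⟨a, b⟩ : ℂ) ∈ Bplus :=
      mem_Bplus_mk.2 ⟨by nlinarith [hb.1, hb.2, ha2.1], hb.1⟩
    simpa [hB₂def, mem_preimage, hsymm] using this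
  have hIntR : IntegrableOn G R volume := hInt.mono_set hRB
  have hvol : (volume : Measure (ℝ × ℝ)) = (volume : Measure ℝ).prod volume :=
    Measure.volume_eq_prod ℝ ℝ
  have hIntR' : IntegrableOn G R ((volume : Measure ℝ).prod volume) := by
    rw [← hvol]; exact hIntR
  have hInt' : IntegrableOn G B₂ ((volume : Measure ℝ).prod volume) := by
    rw [← hvol]; exact hInt
  have hIndInt : Integrable (R.indicator G) ((volume : Measure ℝ).prod volume) := by
    rw [← hvol]; exact (integrable_indicator_iff hRmeas).2 hIntR
  -- slice description
  have heqslice : ∀ u ∈ Irho ρ,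
      (fun v => R.indicator G (u, v)) = (Ioo 0 ρ).indicator (fun v => G (u, v)) := by
    intro u hu
    funext v
    by_cases hv : v ∈ Ioo 0 ρ
    · rw [Set.indicator_of_mem hv,
        Set.indicator_of_mem (show (u, v) ∈ R from ⟨hu, hv⟩)]
    · rw [Set.indicator_of_notMem hv,
        Set.indicator_of_notMem (show (u, v) ∉ R from fun h => hv h.2)]
  have hae1 : ∀ᵐ u : ℝ, u ∈ Irho ρ →
      IntegrableOn (fun v => G (u, v)) (Ioo 0 ρ) volume := by
    filter_upwards [hIndInt.prod_right_ae] with u hu hmem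
    rw [heqslice u hmem] at hu
    exact (integrable_indicator_iff measurableSet_Ioo).1 hu
  -- pointwise estimate a.e. on Irho ρ
  have hptwise : ∀ᵐ u ∂(volume.restrict (Irho ρ)),
      ((x ⟨u, ρ⟩).2.2 - ψ ((x ⟨u, ρ⟩).1, (x ⟨u, ρ⟩).2.1)) ^ 2
        ≤ (1 + L) ^ 2 * (ρ * ∫ v in Ioo 0 ρ, G (u, v)) := by
    rw [ae_restrict_iff' hIρmeas]
    filter_upwards [hae1] with u hint hu
    have hu2 : u ^ 2 + ρ ^ 2 < 1 := (mem_Bplus_mk.1 hu).1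
    exact aux_key hL hr ψ x hψ hx1 hxc hxr hbd hρ0 hu2 (hint hu)
  -- integrability of the majorant
  have hS : IntegrableOn (fun u => ∫ v in Ioo 0 ρ, G (u, v)) (Irho ρ) volume := by
    have hF : Integrable (fun u => ∫ v, R.indicator G (u, v)) volume :=
      hIndInt.integral_prod_left
    refine (hF.integrableOn).congr_fun ?_ hIρmeas
    intro u hu
    show (∫ v, R.indicator G (u, v)) = ∫ v in Ioo 0 ρ, G (u, v)
    rw [heqslice u hu, integral_indicator measurableSet_Ioo]
  have hmajInt : IntegrableOn
      (fun u => (1 + L) ^ 2 * (ρ * ∫ v in Ioo 0 ρ, G (u, v))) (Irho ρ) volume :=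
    (hS.const_mul ρ).const_mul ((1 + L) ^ 2)
  -- main chain
  have hLHS : (∫ u in Irho ρ, ((x ⟨u, ρ⟩).2.2 - ψ ((x ⟨u, ρ⟩).1, (x ⟨u, ρ⟩).2.1)) ^ 2)
      ≤ ∫ u in Irho ρ, (1 + L) ^ 2 * (ρ * ∫ v in Ioo 0 ρ, G (u, v)) :=
    integral_mono_of_nonneg (Filter.Eventually.of_forall fun u => sq_nonneg _)
      hmajInt hptwise
  have hpull : (∫ u in Irho ρ, (1 + L) ^ 2 * (ρ * ∫ v in Ioo 0 ρ, G (u, v)))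
      = (1 + L) ^ 2 * ρ * ∫ u in Irho ρ, ∫ v in Ioo 0 ρ, G (u, v) := by
    rw [integral_const_mul, integral_const_mul]; ring
  have hdouble : (∫ u in Irho ρ, ∫ v in Ioo 0 ρ, G (u, v))
      = ∫ p in R, G p ∂((volume : Measure ℝ).prod volume) :=
    (setIntegral_prod G hIntR').symm
  have hmono : (∫ p in R, G p ∂((volume : Measure ℝ).prod volume))
      ≤ ∫ p in B₂, G p ∂((volume : Measure ℝ).prod volume) :=
    setIntegral_mono_set hInt'
      (Filter.Eventually.of_forall fun p => aux_gradSq_nonneg x _)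
      (HasSubset.Subset.eventuallyLE hRB)
  have hfinal : (∫ p in B₂, G p ∂((volume : Measure ℝ).prod volume))
      = ∫ w in Bplus, gradSq x w := by
    rw [← hvol]
    have := me.setIntegral_preimage_emb emb (gradSq x) Bplus
    rw [← this]
    refine setIntegral_congr_fun hB₂meas fun p _ => ?_
    rw [hGdef, hsymm p]
  have hIneq : (∫ u in Irho ρ, ∫ v in Ioo 0 ρ, G (u, v)) ≤ ∫ w in Bplus, gradSq x w := by
    rw [hdouble, ← hfinal]; exact hmono
  calc (∫ u in Irho ρ, ((x ⟨u, ρ⟩).2.2 - ψ ((x ⟨u, ρ⟩).1, (x ⟨u, ρ⟩).2.1)) ^ 2)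
      ≤ (1 + L) ^ 2 * ρ * ∫ u in Irho ρ, ∫ v in Ioo 0 ρ, G (u, v) := by
        rw [← hpull]; exact hLHS
    _ ≤ (1 + L) ^ 2 * ρ * ∫ w in Bplus, gradSq x w :=
        mul_le_mul_of_nonneg_left hIneq (by positivity)


end
end

section
/- In the local free-boundary setting with the smallness condition, with x satisfying the local H-surface conditions and z = (z¹,z²) defined as stated, there exists a constant c > 0 such that c⁻¹|∇x(w)| ≤ |z(w)| ≤ c|∇x(w)| for all w ∈ B⁺, where |∇x| = (|x_u|² + |x_v|²)^{1/2}. -/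
open Complex MeasureTheory Set Metric Filter Topology

noncomputable section

section AuxZ
lemma absC_ofReal (r : ℝ) : ‖(r : ℂ)‖ = |r| := by
  rw [Complex.norm_real, Real.norm_eq_abs]

lemma absC_sub_le (x y : ℂ) : ‖(x - y)‖ ≤ ‖x‖ + ‖y‖ := by
  calc ‖(x - y)‖ = ‖(x + (-y))‖ := by ring_nf
  _ ≤ ‖x‖ + ‖(-y)‖ := norm_add_le _ _
  _ = ‖x‖ + ‖y‖ := by rw [norm_neg]

lemma abs_add3 (x y z : ℂ) : ‖(x+y+z)‖ ≤ ‖x‖ + ‖y‖ + ‖z‖ := by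
  calc ‖(x+y+z)‖ ≤ ‖(x+y)‖ + ‖z‖ := norm_add_le _ _
  _ ≤ ‖x‖ + ‖y‖ + ‖z‖ := by linarith [norm_add_le x y]

lemma abs_ofReal_mul (r : ℝ) (v : ℂ) : ‖((r:ℂ)*v)‖ = |r| * ‖v‖ := by
  rw [norm_mul, absC_ofReal]

lemma abs_I_mul (r : ℝ) (v : ℂ) : ‖(Complex.I*(r:ℂ)*v)‖ = |r| * ‖v‖ := by
  rw [norm_mul, norm_mul, Complex.norm_I, one_mul, absC_ofReal]

lemma gen_tri3 (W Z R1 R2 : ℂ) (hid : W = Z + R1 + R2) :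
    ‖W‖ ≤ ‖Z‖ + ‖R1‖ + ‖R2‖ := by
  rw [hid]; exact abs_add3 _ _ _

lemma gen_tri4 (W Z R1 R2 R3 : ℂ) (hid : W = Z + (R1 - R2 - R3)) :
    ‖W‖ ≤ ‖Z‖ + ‖R1‖ + ‖R2‖ + ‖R3‖ := by
  rw [hid]
  have h0 := norm_add_le Z (R1-R2-R3)
  have t1 := absC_sub_le (R1-R2) R3
  have t2 := absC_sub_le R1 R2
  have h1 : ‖(R1 - R2 - R3)‖ ≤ ‖R1‖ + ‖R2‖ + ‖R3‖ := by
    linarith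
  linarith

variable (γ : ℝ → ℝ) (ψ : ℝ × ℝ → ℝ) (Q : P3 → P3) (x : ℂ → P3) (w : ℂ)

lemma z1_lower :
    ‖(wder (c3 x) w)‖ ≤ ‖(z1 ψ x w)‖
      + |psip1 ψ ((x w).1, (x w).2.1)| * ‖(wder (c1 x) w)‖
      + |psip2 ψ ((x w).1, (x w).2.1)| * ‖(wder (c2 x) w)‖ := by
  have h0 : ‖(wder (c3 x) w)‖ = ‖(Complex.I * wder (c3 x) w)‖ := by
    rw [norm_mul, Complex.norm_I, one_mul]
  have h1 := gen_tri3 (Complex.I * wder (c3 x) w) (z1 ψ x w)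
      (Complex.I*((psip1 ψ ((x w).1, (x w).2.1) : ℝ) : ℂ)*wder (c1 x) w)
      (Complex.I*((psip2 ψ ((x w).1, (x w).2.1) : ℝ) : ℂ)*wder (c2 x) w)
      (by simp only [z1]; ring)
  rw [abs_I_mul, abs_I_mul] at h1
  linarith [h0 ▸ h1]

lemma z1_upper :
    ‖(z1 ψ x w)‖ ≤ |psip1 ψ ((x w).1, (x w).2.1)| * ‖(wder (c1 x) w)‖
      + |psip2 ψ ((x w).1, (x w).2.1)| * ‖(wder (c2 x) w)‖
      + ‖(wder (c3 x) w)‖ := by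
  have h1 := gen_tri3 (z1 ψ x w)
      (-(Complex.I*((psip1 ψ ((x w).1, (x w).2.1) : ℝ) : ℂ)*wder (c1 x) w))
      (-(Complex.I*((psip2 ψ ((x w).1, (x w).2.1) : ℝ) : ℂ)*wder (c2 x) w))
      (Complex.I*wder (c3 x) w)
      (by simp only [z1]; ring)
  rw [norm_neg, norm_neg, abs_I_mul, abs_I_mul, norm_mul,
    Complex.norm_I, one_mul] at h1
  exact h1

lemma z2_lower :
    ‖(wder (c1 x) w + Complex.I*((qfun ψ Q (x w) : ℝ) : ℂ)*wder (c2 x) w)‖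
      ≤ ‖(z2 γ ψ Q x w)‖
      + |qfun ψ Q (x w)| * |deriv γ ((x w).1)| * ‖(wder (c1 x) w)‖
      + |deriv γ ((x w).1)| * ‖(wder (c2 x) w)‖
      + (|psip1 ψ ((x w).1, (x w).2.1)| + |psip2 ψ ((x w).1, (x w).2.1)| * |deriv γ ((x w).1)|)
          * ‖(wder (c3 x) w)‖ := by
  have h1 := gen_tri4 (wder (c1 x) w + Complex.I*((qfun ψ Q (x w) : ℝ) : ℂ)*wder (c2 x) w)
      (z2 γ ψ Q x w)
      (Complex.I*(((qfun ψ Q (x w)) * (deriv γ ((x w).1)) : ℝ) : ℂ)*wder (c1 x) w)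
      (((deriv γ ((x w).1) : ℝ) : ℂ)*wder (c2 x) w)
      ((((psip1 ψ ((x w).1, (x w).2.1) + psip2 ψ ((x w).1, (x w).2.1) * deriv γ ((x w).1)) : ℝ) : ℂ)*wder (c3 x) w)
      (by simp only [z2]; push_cast; ring)
  rw [abs_I_mul, abs_ofReal_mul, abs_ofReal_mul, abs_mul] at h1
  have h3 : |psip1 ψ ((x w).1, (x w).2.1) + psip2 ψ ((x w).1, (x w).2.1) * deriv γ ((x w).1)|
      ≤ |psip1 ψ ((x w).1, (x w).2.1)| + |psip2 ψ ((x w).1, (x w).2.1)| * |deriv γ ((x w).1)| := by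
    have := abs_add_le (psip1 ψ ((x w).1, (x w).2.1)) (psip2 ψ ((x w).1, (x w).2.1) * deriv γ ((x w).1))
    rw [abs_mul] at this; exact this
  nlinarith [norm_nonneg (wder (c3 x) w), h1, h3]

lemma z2_upper :
    ‖(z2 γ ψ Q x w)‖
      ≤ (1 + |qfun ψ Q (x w)| * |deriv γ ((x w).1)|) * ‖(wder (c1 x) w)‖
      + (|deriv γ ((x w).1)| + |qfun ψ Q (x w)|) * ‖(wder (c2 x) w)‖
      + (|psip1 ψ ((x w).1, (x w).2.1)| + |psip2 ψ ((x w).1, (x w).2.1)| * |deriv γ ((x w).1)|)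
          * ‖(wder (c3 x) w)‖ := by
  have h0 := abs_add3 ((1 - Complex.I * ((qfun ψ Q (x w) : ℝ) : ℂ) * ((deriv γ ((x w).1) : ℝ) : ℂ)) * wder (c1 x) w)
      ((((deriv γ ((x w).1) : ℝ) : ℂ) + Complex.I * ((qfun ψ Q (x w) : ℝ) : ℂ)) * wder (c2 x) w)
      ((((psip1 ψ ((x w).1, (x w).2.1) : ℝ) : ℂ)
        + ((psip2 ψ ((x w).1, (x w).2.1) : ℝ) : ℂ) * ((deriv γ ((x w).1) : ℝ) : ℂ)) * wder (c3 x) w)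
  have hz : z2 γ ψ Q x w = (1 - Complex.I * ((qfun ψ Q (x w) : ℝ) : ℂ) * ((deriv γ ((x w).1) : ℝ) : ℂ)) * wder (c1 x) w
      + ((((deriv γ ((x w).1) : ℝ) : ℂ) + Complex.I * ((qfun ψ Q (x w) : ℝ) : ℂ)) * wder (c2 x) w)
      + ((((psip1 ψ ((x w).1, (x w).2.1) : ℝ) : ℂ)
        + ((psip2 ψ ((x w).1, (x w).2.1) : ℝ) : ℂ) * ((deriv γ ((x w).1) : ℝ) : ℂ)) * wder (c3 x) w) := by
    simp only [z2]
  rw [← hz, norm_mul, norm_mul, norm_mul] at h0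
  have h1 : ‖((1 - Complex.I * ((qfun ψ Q (x w) : ℝ) : ℂ) * ((deriv γ ((x w).1) : ℝ) : ℂ)))‖
      ≤ 1 + |qfun ψ Q (x w)| * |deriv γ ((x w).1)| := by
    have := absC_sub_le 1 (Complex.I * ((qfun ψ Q (x w) : ℝ) : ℂ) * ((deriv γ ((x w).1) : ℝ) : ℂ))
    rw [norm_one, norm_mul, norm_mul, Complex.norm_I, one_mul, absC_ofReal, absC_ofReal] at this
    exact this
  have h2 : ‖(((deriv γ ((x w).1) : ℝ) : ℂ) + Complex.I * ((qfun ψ Q (x w) : ℝ) : ℂ))‖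
      ≤ |deriv γ ((x w).1)| + |qfun ψ Q (x w)| := by
    have := norm_add_le ((deriv γ ((x w).1) : ℝ) : ℂ) (Complex.I * ((qfun ψ Q (x w) : ℝ) : ℂ))
    rw [norm_mul, Complex.norm_I, one_mul, absC_ofReal, absC_ofReal] at this
    exact this
  have h3 : ‖(((psip1 ψ ((x w).1, (x w).2.1) : ℝ) : ℂ)
        + ((psip2 ψ ((x w).1, (x w).2.1) : ℝ) : ℂ) * ((deriv γ ((x w).1) : ℝ) : ℂ))‖
      ≤ |psip1 ψ ((x w).1, (x w).2.1)| + |psip2 ψ ((x w).1, (x w).2.1)| * |deriv γ ((x w).1)| := by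
    have := norm_add_le ((psip1 ψ ((x w).1, (x w).2.1) : ℝ) : ℂ)
      (((psip2 ψ ((x w).1, (x w).2.1) : ℝ) : ℂ) * ((deriv γ ((x w).1) : ℝ) : ℂ))
    rw [norm_mul, absC_ofReal, absC_ofReal, absC_ofReal] at this
    exact this
  nlinarith [norm_nonneg (wder (c1 x) w), norm_nonneg (wder (c2 x) w),
    norm_nonneg (wder (c3 x) w), h0, h1, h2, h3]

lemma abs_wder_sq (f : ℂ → ℝ) (w : ℂ) :
    ‖(wder f w)‖^2 = ((du f w)^2 + (dv f w)^2)/4 := by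
  rw [wder, Complex.sq_norm]
  have h : (((du f w : ℝ):ℂ) - Complex.I*((dv f w : ℝ):ℂ))/2 = ⟨du f w/2, -(dv f w)/2⟩ := by
    apply Complex.ext <;> simp
  rw [h, Complex.normSq_mk]; ring

lemma conf_core (u1 v1 u2 v2 u3 v3 : ℝ)
    (h1 : u1^2+u2^2+u3^2 = v1^2+v2^2+v3^2) (h2 : u1*v1+u2*v2+u3*v3 = 0) :
    (((u1:ℂ) - Complex.I*v1)/2)^2 + (((u2:ℂ) - Complex.I*v2)/2)^2 + (((u3:ℂ) - Complex.I*v3)/2)^2 = 0 := by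
  have hI := Complex.I_sq
  have hc1 : ((u1:ℂ)^2+(u2:ℂ)^2+(u3:ℂ)^2) = ((v1:ℂ)^2+(v2:ℂ)^2+(v3:ℂ)^2) := by
    exact_mod_cast congrArg (Complex.ofReal) h1
  have hc2 : ((u1:ℂ)*v1+(u2:ℂ)*v2+(u3:ℂ)*v3) = 0 := by
    exact_mod_cast congrArg (Complex.ofReal) h2
  linear_combination hc1/4 - Complex.I*hc2/2 + ((v1:ℂ)^2+(v2:ℂ)^2+(v3:ℂ)^2)/4 * hI

lemma conf_aux (h1 : normSq3 (gradU x w) = normSq3 (gradV x w))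
    (h2 : dot3 (gradU x w) (gradV x w) = 0) :
    (wder (c1 x) w)^2 + (wder (c2 x) w)^2 + (wder (c3 x) w)^2 = 0 := by
  simp only [normSq3, gradU, gradV] at h1
  simp only [dot3, gradU, gradV] at h2
  simp only [wder]
  exact conf_core _ _ _ _ _ _ h1 h2
lemma real_key (e A B C T : ℝ) (he : 0 < e) (he1 : e ≤ 1) (hA : 0 ≤ A) (hB : 0 ≤ B)
    (hC : 0 ≤ C) (hT : 0 ≤ T)
    (h1 : e*B^2 ≤ C^2 + T*A + T*B) (h2 : A ≤ T + B) :
    e^2*(A^2+B^2+C^2) ≤ 21*(C^2+T^2) := by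
  have he2 : e^2 ≤ 1 := by nlinarith
  have k1 : T*A ≤ T^2 + T*B := by nlinarith [mul_le_mul_of_nonneg_left h2 hT]
  have k2 : e*B^2 ≤ C^2 + T^2 + 2*(T*B) := by linarith
  have k3 : e*(T*B) ≤ e^2*B^2/4 + T^2 := by nlinarith [sq_nonneg (e*B - 2*T)]
  have k4 : e^2*B^2 ≤ 2*C^2 + 6*T^2 := by nlinarith [mul_le_mul_of_nonneg_left k2 he.le, sq_nonneg C, sq_nonneg T]
  have kA : A^2 ≤ 2*T^2 + 2*B^2 := by
    nlinarith [mul_le_mul h2 h2 hA (by linarith : (0:ℝ) ≤ T+B), sq_nonneg (T-B)]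
  have k5 : e^2*A^2 ≤ 4*C^2 + 14*T^2 := by
    have := mul_le_mul_of_nonneg_left kA (sq_nonneg e)
    nlinarith [mul_le_mul_of_nonneg_right he2 (sq_nonneg T)]
  have k6 : e^2*C^2 ≤ C^2 := by nlinarith [mul_le_mul_of_nonneg_right he2 (sq_nonneg C)]
  nlinarith [k4, k5, k6, sq_nonneg T, sq_nonneg C]

lemma key_lemma (q₀ : ℝ) (h0 : 0 < q₀) (h1 : q₀ < 1) (q : ℝ) (hq : |q| ≤ q₀) (a b c : ℂ)
    (h : a^2+b^2+c^2 = 0) :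
    (1-q₀^2)^2/21 * (‖a‖^2 + ‖b‖^2 + ‖c‖^2)
      ≤ ‖c‖^2 + ‖(a + Complex.I*q*b)‖^2 := by
  set A := ‖a‖
  set B := ‖b‖
  set C := ‖c‖
  set T := ‖(a + Complex.I*q*b)‖ with hT
  have hqabs : ‖(Complex.I*(q:ℂ)*b)‖ = |q| * B := by
    simp [norm_mul, absC_ofReal, B]
  have step1 : A ≤ T + |q| * B := by
    have e0 : a = (a + Complex.I*q*b) + (-(Complex.I*q*b)) := by ring
    calc A = ‖((a + Complex.I*q*b) + (-(Complex.I*q*b)))‖ := by rw [← e0]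
    _ ≤ T + ‖(-(Complex.I*q*b))‖ := norm_add_le _ _
    _ = T + |q| * B := by rw [norm_neg, hqabs]
  have ident : ((1:ℂ) - (q:ℂ)^2)*b^2 = -(c^2) - (a + Complex.I*q*b)*(a - Complex.I*q*b) := by
    linear_combination h - ((q:ℂ)^2*b^2) * Complex.I_sq
  have step2 : (1-q^2) * B^2 ≤ C^2 + T*(A + |q| * B) := by
    have e1 : ‖(((1:ℂ) - (q:ℂ)^2)*b^2)‖ = (1-q^2) * B^2 := by
      rw [norm_mul, norm_pow]
      have h3 : ((1:ℂ) - (q:ℂ)^2) = ((1 - q^2 : ℝ) : ℂ) := by push_cast; ring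
      rw [h3, absC_ofReal, _root_.abs_of_nonneg (by nlinarith [abs_nonneg q, _root_.sq_abs q] : (0:ℝ) ≤ 1 - q^2)]
    have e2 : ‖(a - Complex.I*q*b)‖ ≤ A + |q| * B := by
      calc ‖(a - Complex.I*q*b)‖ ≤ A + ‖(Complex.I*q*b)‖ := absC_sub_le _ _
      _ = A + |q| * B := by rw [hqabs]
    calc (1-q^2) * B^2 = ‖(((1:ℂ) - (q:ℂ)^2)*b^2)‖ := e1.symm
    _ = ‖(-(c^2) - (a + Complex.I*q*b)*(a - Complex.I*q*b))‖ := by rw [ident]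
    _ ≤ ‖(-(c^2))‖ + ‖((a + Complex.I*q*b)*(a - Complex.I*q*b))‖ := absC_sub_le _ _
    _ = C^2 + T * ‖(a - Complex.I*q*b)‖ := by rw [norm_neg, norm_pow, norm_mul]
    _ ≤ C^2 + T*(A + |q| * B) := by nlinarith [norm_nonneg (a + Complex.I*q*b), e2]
  have hqa : 0 ≤ |q| := abs_nonneg q
  have hq1 : |q| ≤ 1 := hq.trans h1.le
  have he : (0:ℝ) < 1 - q₀^2 := by nlinarith
  have hB : 0 ≤ B := norm_nonneg b
  have hA : 0 ≤ A := norm_nonneg a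
  have hC : 0 ≤ C := norm_nonneg c
  have hTn : 0 ≤ T := norm_nonneg _
  have h1' : (1-q₀^2)*B^2 ≤ C^2 + T*A + T*B := by
    have h5 : (1-q₀^2)*B^2 ≤ (1-q^2)*B^2 := by nlinarith [_root_.sq_abs q, sq_nonneg B, mul_self_le_mul_self (abs_nonneg q) hq, mul_le_mul_of_nonneg_right (mul_self_le_mul_self (abs_nonneg q) hq) (sq_nonneg B)]
    nlinarith [mul_nonneg hTn hB, mul_le_mul_of_nonneg_left hq1 (mul_nonneg hTn hB)]
  have h2' : A ≤ T + B := by nlinarith [mul_le_mul_of_nonneg_right hq1 hB]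
  have := real_key (1-q₀^2) A B C T he (by nlinarith) hA hB hC hTn h1' h2'
  nlinarith [this]

lemma final_low (δ ε A B C T Z1 Z2 : ℝ) (hδ : 0 < δ)
    (hA : 0 ≤ A) (hB : 0 ≤ B) (hC : 0 ≤ C) (hT : 0 ≤ T) (hZ1 : 0 ≤ Z1) (hZ2 : 0 ≤ Z2)
    (hε : 0 ≤ ε) (hεδ : ε^2 ≤ δ/144)
    (f4 : δ*(A^2+B^2+C^2) ≤ C^2+T^2)
    (f5 : C ≤ Z1 + ε*A + ε*B)
    (f6 : T ≤ Z2 + ε*A + ε*B + 2*ε*C) :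
    δ*(A^2+B^2+C^2)/4 ≤ Z1^2 + Z2^2 := by
  have hS0 : (0:ℝ) ≤ A^2+B^2+C^2 := by positivity
  have hC2 : C^2 ≤ 2*Z1^2 + 4*ε^2*(A^2+B^2+C^2) := by
    nlinarith [mul_self_le_mul_self hC f5, sq_nonneg (Z1 - ε*A - ε*B), sq_nonneg (ε*A - ε*B),
      sq_nonneg (ε*C)]
  have hT2 : T^2 ≤ 2*Z2^2 + 24*ε^2*(A^2+B^2+C^2) := by
    nlinarith [mul_self_le_mul_self hT f6, sq_nonneg (Z2 - ε*A - ε*B - 2*ε*C),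
      sq_nonneg (ε*A - ε*B), sq_nonneg (ε*A - 2*ε*C), sq_nonneg (ε*B - 2*ε*C)]
  nlinarith [mul_le_mul_of_nonneg_right hεδ hS0]

lemma final_up (A B C Z1 Z2 : ℝ)
    (hZ1 : 0 ≤ Z1) (hZ2 : 0 ≤ Z2)
    (f7 : Z1 ≤ A + B + C) (f8 : Z2 ≤ 2*A + 2*B + 2*C) :
    Z1^2 + Z2^2 ≤ 15*(A^2+B^2+C^2) := by
  nlinarith [mul_self_le_mul_self hZ1 f7, mul_self_le_mul_self hZ2 f8,
    sq_nonneg (A-B), sq_nonneg (A-C), sq_nonneg (B-C)]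

end AuxZ

/-- Proposition 2: `z` is comparable to `|∇x|`. -/
theorem zpair_comparable_grad (q₀ : ℝ) (hq₀0 : 0 < q₀) (hq₀1 : q₀ < 1) :
    ∃ ε > 0, ∀ (r : ℝ) (γ : ℝ → ℝ) (ψ : ℝ × ℝ → ℝ) (Q : P3 → P3) (x : ℂ → P3),
      HSetting q₀ ε r γ ψ Q x →
      ∃ c > 0, ∀ w ∈ Bplus,
        c⁻¹ * Real.sqrt (gradSq x w) ≤ cnorm2 (zpair γ ψ Q x w) ∧
        cnorm2 (zpair γ ψ Q x w) ≤ c * Real.sqrt (gradSq x w) := by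
  have hδpos : (0:ℝ) < (1-q₀^2)^2/21 := by
    have h1 : (0:ℝ) < 1 - q₀^2 := by nlinarith
    positivity
  set δ : ℝ := (1-q₀^2)^2/21 with hδdef
  have hsδ : 0 < Real.sqrt δ := Real.sqrt_pos.mpr hδpos
  clear_value δ
  refine ⟨min 1 (Real.sqrt δ / 12), lt_min one_pos (div_pos hsδ (by norm_num)), ?_⟩
  intro r γ ψ Q x H
  set ε := min 1 (Real.sqrt δ / 12) with hεdef
  have hεpos : 0 < ε := lt_min one_pos (div_pos hsδ (by norm_num))
  have hε1 : ε ≤ 1 := min_le_left _ _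
  have hεδ : ε^2 ≤ δ/144 := by
    have h2 : ε ≤ Real.sqrt δ / 12 := min_le_right _ _
    nlinarith only [Real.sq_sqrt hδpos.le, mul_self_le_mul_self hεpos.le h2]
  clear_value ε
  refine ⟨max 5 (4 / Real.sqrt δ), lt_of_lt_of_le (by norm_num) (le_max_left _ _), ?_⟩
  intro w hw
  set cst := max 5 (4 / Real.sqrt δ) with hcstdef
  have hcst5 : (5:ℝ) ≤ cst := le_max_left _ _
  have hcpos : (0:ℝ) < cst := by linarith only [hcst5]
  have hcinv : (cst⁻¹)^2 ≤ δ/16 := by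
    have h4 : 4 / Real.sqrt δ ≤ cst := le_max_right _ _
    have h5 : cst⁻¹ ≤ Real.sqrt δ / 4 := by
      rw [show Real.sqrt δ / 4 = (4 / Real.sqrt δ)⁻¹ by rw [inv_div]]
      exact inv_anti₀ (div_pos (by norm_num) hsδ) h4
    nlinarith only [Real.sq_sqrt hδpos.le, mul_self_le_mul_self (inv_nonneg.mpr hcpos.le) h5]
  clear_value cst
  -- pointwise facts
  have hr := H.hr
  have hwcl : w ∈ closure Bplus := subset_closure hw
  have hxw : normSq3 (x w) < r^2 := H.hxr w hwcl
  have hxw' : (x w).1^2 + (x w).2.1^2 + (x w).2.2^2 < r^2 := by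
    simpa [normSq3] using hxw
  have h1a : |(x w).1| ≤ r := by
    rw [abs_le]
    constructor <;>
      nlinarith only [hxw', hr, sq_nonneg ((x w).2.1), sq_nonneg ((x w).2.2),
        sq_nonneg ((x w).1 + r), sq_nonneg ((x w).1 - r)]
  have h1b : |(x w).2.1| ≤ r := by
    rw [abs_le]
    constructor <;>
      nlinarith only [hxw', hr, sq_nonneg ((x w).1), sq_nonneg ((x w).2.2),
        sq_nonneg ((x w).2.1 + r), sq_nonneg ((x w).2.1 - r)]
  have hqb : |qfun ψ Q (x w)| ≤ q₀ := H.hqbound _ hxw.le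
  have hgb : |deriv γ ((x w).1)| ≤ ε :=
    H.hsmallγ _ ⟨(abs_le.mp h1a).1, (abs_le.mp h1a).2⟩
  have hmem : ((x w).1, (x w).2.1) ∈ closedBall (0 : ℝ×ℝ) r := by
    rw [mem_closedBall_zero_iff, Prod.norm_def]
    exact max_le (by simpa using h1a) (by simpa using h1b)
  have hop : ‖fderiv ℝ ψ ((x w).1, (x w).2.1)‖ ≤ ε := H.hsmallψ _ hmem
  have hp1 : |psip1 ψ ((x w).1, (x w).2.1)| ≤ ε := by
    have h6 := (fderiv ℝ ψ ((x w).1, (x w).2.1)).le_opNorm ((1:ℝ),(0:ℝ))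
    have hn : ‖((1:ℝ),(0:ℝ))‖ = 1 := by rw [Prod.norm_def]; simp
    rw [hn, mul_one] at h6
    have h7 : |psip1 ψ ((x w).1, (x w).2.1)| = ‖fderiv ℝ ψ ((x w).1, (x w).2.1) ((1:ℝ),(0:ℝ))‖ := by
      rw [Real.norm_eq_abs]; rfl
    rw [h7]; exact h6.trans hop
  have hp2 : |psip2 ψ ((x w).1, (x w).2.1)| ≤ ε := by
    have h6 := (fderiv ℝ ψ ((x w).1, (x w).2.1)).le_opNorm ((0:ℝ),(1:ℝ))
    have hn : ‖((0:ℝ),(1:ℝ))‖ = 1 := by rw [Prod.norm_def]; simp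
    rw [hn, mul_one] at h6
    have h7 : |psip2 ψ ((x w).1, (x w).2.1)| = ‖fderiv ℝ ψ ((x w).1, (x w).2.1) ((0:ℝ),(1:ℝ))‖ := by
      rw [Real.norm_eq_abs]; rfl
    rw [h7]; exact h6.trans hop
  -- abbreviations
  set A := ‖(wder (c1 x) w)‖ with hA
  set B := ‖(wder (c2 x) w)‖ with hB
  set C := ‖(wder (c3 x) w)‖ with hC
  set Z1 := ‖(z1 ψ x w)‖ with hZ1
  set Z2 := ‖(z2 γ ψ Q x w)‖ with hZ2
  set T := ‖(wder (c1 x) w + Complex.I*((qfun ψ Q (x w) : ℝ) : ℂ)*wder (c2 x) w)‖ with hTdef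
  clear_value A B C Z1 Z2 T
  have hAnn : 0 ≤ A := hA ▸ norm_nonneg _
  have hBnn : 0 ≤ B := hB ▸ norm_nonneg _
  have hCnn : 0 ≤ C := hC ▸ norm_nonneg _
  have hZ1nn : 0 ≤ Z1 := hZ1 ▸ norm_nonneg _
  have hZ2nn : 0 ≤ Z2 := hZ2 ▸ norm_nonneg _
  have hTnn : 0 ≤ T := hTdef ▸ norm_nonneg _
  -- conformality and key lemma
  have hcf := conf_aux x w (H.hconf1 w hw) (H.hconf2 w hw)
  have hkey := key_lemma q₀ hq₀0 hq₀1 (qfun ψ Q (x w)) hqb _ _ _ hcf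
  rw [← hA, ← hB, ← hC, ← hTdef, ← hδdef] at hkey
  -- gradSq relation
  have hgs : gradSq x w = 4*(A^2 + B^2 + C^2) := by
    rw [hA, hB, hC, abs_wder_sq, abs_wder_sq, abs_wder_sq]
    simp only [gradSq, normSq3, gradU, gradV]
    ring
  have hS0 : (0:ℝ) ≤ A^2 + B^2 + C^2 := by
    have k1 := sq_nonneg A; have k2 := sq_nonneg B; have k3 := sq_nonneg C
    linarith only [k1, k2, k3]
  -- elementary bounds on coefficients
  have hγ1 : |deriv γ ((x w).1)| ≤ 1 := hgb.trans hε1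
  have hq1 : |qfun ψ Q (x w)| ≤ 1 := hqb.trans hq₀1.le
  have hqnn : 0 ≤ |qfun ψ Q (x w)| := abs_nonneg _
  have hgnn : 0 ≤ |deriv γ ((x w).1)| := abs_nonneg _
  have hp1nn : 0 ≤ |psip1 ψ ((x w).1, (x w).2.1)| := abs_nonneg _
  have hp2nn : 0 ≤ |psip2 ψ ((x w).1, (x w).2.1)| := abs_nonneg _
  have eqg : |qfun ψ Q (x w)| * |deriv γ ((x w).1)| ≤ ε := by
    have h9 := mul_le_mul hq1 hgb hgnn zero_le_one
    linarith only [h9]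
  have ep2g : |psip2 ψ ((x w).1, (x w).2.1)| * |deriv γ ((x w).1)| ≤ ε := by
    have h9 := mul_le_mul hp2 hγ1 hgnn hεpos.le
    linarith only [h9]
  have f5 : C ≤ Z1 + ε*A + ε*B := by
    have h9 := z1_lower ψ x w
    rw [← hA, ← hB, ← hC, ← hZ1] at h9
    linarith only [h9, mul_le_mul_of_nonneg_right hp1 hAnn, mul_le_mul_of_nonneg_right hp2 hBnn]
  have f6 : T ≤ Z2 + ε*A + ε*B + 2*ε*C := by
    have h8 := z2_lower γ ψ Q x w
    rw [← hA, ← hB, ← hC, ← hZ2, ← hTdef] at h8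
    have e2 : |psip1 ψ ((x w).1, (x w).2.1)| + |psip2 ψ ((x w).1, (x w).2.1)| * |deriv γ ((x w).1)| ≤ 2*ε := by
      linarith only [hp1, ep2g]
    linarith only [h8, mul_le_mul_of_nonneg_right eqg hAnn, mul_le_mul_of_nonneg_right hgb hBnn,
      mul_le_mul_of_nonneg_right e2 hCnn]
  have f7 : Z1 ≤ A + B + C := by
    have h9 := z1_upper ψ x w
    rw [← hA, ← hB, ← hC, ← hZ1] at h9
    linarith only [h9, mul_le_mul_of_nonneg_right (hp1.trans hε1) hAnn,
      mul_le_mul_of_nonneg_right (hp2.trans hε1) hBnn]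
  have f8 : Z2 ≤ 2*A + 2*B + 2*C := by
    have h8 := z2_upper γ ψ Q x w
    rw [← hA, ← hB, ← hC, ← hZ2] at h8
    have e1 : 1 + |qfun ψ Q (x w)| * |deriv γ ((x w).1)| ≤ 2 := by
      linarith only [eqg, hε1]
    have e2 : |deriv γ ((x w).1)| + |qfun ψ Q (x w)| ≤ 2 := by
      linarith only [hγ1, hq1]
    have e3 : |psip1 ψ ((x w).1, (x w).2.1)| + |psip2 ψ ((x w).1, (x w).2.1)| * |deriv γ ((x w).1)| ≤ 2 := by
      linarith only [hp1.trans hε1, ep2g, hε1]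
    linarith only [h8, mul_le_mul_of_nonneg_right e1 hAnn, mul_le_mul_of_nonneg_right e2 hBnn,
      mul_le_mul_of_nonneg_right e3 hCnn]
  -- final squared estimates
  have hmain := final_low δ ε A B C T Z1 Z2 hδpos hAnn hBnn hCnn hTnn hZ1nn hZ2nn
    hεpos.le hεδ hkey f5 f6
  have hup15 := final_up A B C Z1 Z2 hZ1nn hZ2nn f7 f8
  have hlow_sq : (cst⁻¹)^2 * gradSq x w ≤ Z1^2 + Z2^2 := by
    rw [hgs]
    linarith only [hmain, mul_le_mul_of_nonneg_right hcinv hS0]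
  have hup_sq : Z1^2 + Z2^2 ≤ cst^2 * gradSq x w := by
    rw [hgs]
    have h25 : (25:ℝ) ≤ cst*cst := by
      have := mul_le_mul hcst5 hcst5 (by norm_num) hcpos.le
      linarith only [this]
    have h26 := mul_le_mul_of_nonneg_right h25 hS0
    nlinarith only [hup15, h26, hS0]
  have hcn : cnorm2 (zpair γ ψ Q x w) = Real.sqrt (Z1^2 + Z2^2) := by
    rw [hZ1, hZ2]; simp only [cnorm2, zpair]
  have hgnn2 : (0:ℝ) ≤ gradSq x w := by rw [hgs]; linarith only [hS0]
  constructor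
  · have e1 : cst⁻¹ * Real.sqrt (gradSq x w) = Real.sqrt ((cst⁻¹)^2 * gradSq x w) := by
      rw [Real.sqrt_mul (sq_nonneg _), Real.sqrt_sq (inv_nonneg.mpr hcpos.le)]
    rw [hcn, e1]
    exact Real.sqrt_le_sqrt hlow_sq
  · have e1 : cst * Real.sqrt (gradSq x w) = Real.sqrt (cst^2 * gradSq x w) := by
      rw [Real.sqrt_mul (sq_nonneg _), Real.sqrt_sq hcpos.le]
    rw [hcn, e1]
    exact Real.sqrt_le_sqrt hup_sq


end
end
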